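/- arXiv:1703.04193 — 7 statements merged into one kernel-verified Lean document; each statement's English description precedes it below -/
import Mathlib

section
/- Let F ∈ (Z/2)[[x]] be the power series F = Σ_{k≥0} x^{(2k+1)^2} (the sum of x^n over odd squares n), and let G = F(x^3) (the series obtained by substituting x^3 for x). Then (F+G)^4 = F·G in (Z/2)[[x]]. -/
open scoped Classical

/-- `F = Σ x^{(2k+1)^2}`, the sum over odd squares. -/
noncomputable def F : PowerSeries (ZMod 2) :=
  PowerSeries.mk fun n => if ∃ k, n = (2 * k + 1) ^ 2 then 1 else 0

/-- `G = F(x^3)`. -/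
noncomputable def G : PowerSeries (ZMod 2) :=
  PowerSeries.mk fun n => if ∃ k, n = 3 * (2 * k + 1) ^ 2 then 1 else 0

namespace ProofAux

open PowerSeries Finset

instance : CharP (PowerSeries (ZMod 2)) 2 :=
  charP_of_injective_ringHom PowerSeries.C_injective 2

lemma zmod2_mul_self (x : ZMod 2) : x * x = x := by revert x; decide

lemma coeff_sq (f : PowerSeries (ZMod 2)) (m : ℕ) :
    PowerSeries.coeff m (f ^ 2) =
      if 2 ∣ m then PowerSeries.coeff (m / 2) f else 0 := by
  rw [pow_two, PowerSeries.coeff_mul]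
  rw [← Finset.sum_filter_add_sum_filter_not (HasAntidiagonal.antidiagonal m) (fun p => p.1 = p.2)]
  have h2 : ∑ p ∈ (HasAntidiagonal.antidiagonal m).filter (fun p => ¬ p.1 = p.2),
      PowerSeries.coeff p.1 f * PowerSeries.coeff p.2 f = 0 := by
    apply Finset.sum_involution (fun p _ => (p.2, p.1))
    · intro p hp
      rw [mul_comm]
      exact CharTwo.add_self_eq_zero _
    · intro p hp _
      simp only [Finset.mem_filter] at hp
      intro h
      apply hp.2
      have := congrArg Prod.fst h
      simpa using this.symm
    · intro p hp
      simp only [Finset.mem_filter, HasAntidiagonal.mem_antidiagonal] at hp ⊢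
      omega
    · intro p hp
      rfl
  rw [h2, add_zero]
  have h3 : (HasAntidiagonal.antidiagonal m).filter (fun p => p.1 = p.2) =
      if 2 ∣ m then {(m / 2, m / 2)} else (∅ : Finset (ℕ × ℕ)) := by
    split_ifs with h
    · ext p
      simp only [Finset.mem_filter, HasAntidiagonal.mem_antidiagonal, Finset.mem_singleton, Prod.ext_iff]
      omega
    · ext p
      simp only [Finset.mem_filter, HasAntidiagonal.mem_antidiagonal, Finset.notMem_empty, iff_false,
        not_and]
      omega
  rw [h3]
  split_ifs with h
  · rw [Finset.sum_singleton, zmod2_mul_self]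
  · rw [Finset.sum_empty]

lemma mk_sq (P : ℕ → Prop) :
    (PowerSeries.mk fun n => if P n then (1 : ZMod 2) else 0) ^ 2 =
      PowerSeries.mk fun n => if ∃ m, n = 2 * m ∧ P m then 1 else 0 := by
  ext n
  rw [coeff_sq, PowerSeries.coeff_mk]
  by_cases h : 2 ∣ n
  · obtain ⟨m, rfl⟩ := h
    rw [if_pos ⟨m, rfl⟩, Nat.mul_div_cancel_left _ (by norm_num), PowerSeries.coeff_mk]
    have : (∃ m', 2 * m = 2 * m' ∧ P m') ↔ P m := by
      constructor
      · rintro ⟨m', hm', hP⟩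
        have : m = m' := by omega
        rwa [this]
      · intro hP
        exact ⟨m, rfl, hP⟩
    rw [if_congr this rfl rfl]
  · rw [if_neg h, PowerSeries.coeff_mk, if_neg]
    rintro ⟨m, rfl, -⟩
    exact h ⟨m, rfl⟩

lemma mk_ind_congr {P Q : ℕ → Prop} (h : ∀ n, P n ↔ Q n) :
    (PowerSeries.mk fun n => if P n then (1 : ZMod 2) else 0) =
      PowerSeries.mk fun n => if Q n then 1 else 0 := by
  ext n
  simp only [PowerSeries.coeff_mk]
  rw [if_congr (h n) rfl rfl]

lemma F_pow_four : F ^ 4 = PowerSeries.mk fun n =>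
    if ∃ k, n = 4 * (2 * k + 1) ^ 2 then (1 : ZMod 2) else 0 := by
  have h2 : F ^ 2 = PowerSeries.mk fun n =>
      if ∃ k, n = 2 * (2 * k + 1) ^ 2 then (1 : ZMod 2) else 0 := by
    rw [F, mk_sq]
    apply mk_ind_congr
    intro n
    constructor
    · rintro ⟨m, rfl, k, rfl⟩; exact ⟨k, rfl⟩
    · rintro ⟨k, rfl⟩; exact ⟨(2 * k + 1) ^ 2, rfl, k, rfl⟩
  have h4 : F ^ 4 = (F ^ 2) ^ 2 := by ring
  rw [h4, h2, mk_sq]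
  apply mk_ind_congr
  intro n
  constructor
  · rintro ⟨m, rfl, k, rfl⟩; exact ⟨k, by ring⟩
  · rintro ⟨k, rfl⟩; exact ⟨2 * (2 * k + 1) ^ 2, by ring, k, rfl⟩

lemma G_pow_four : G ^ 4 = PowerSeries.mk fun n =>
    if ∃ k, n = 12 * (2 * k + 1) ^ 2 then (1 : ZMod 2) else 0 := by
  have h2 : G ^ 2 = PowerSeries.mk fun n =>
      if ∃ k, n = 6 * (2 * k + 1) ^ 2 then (1 : ZMod 2) else 0 := by
    rw [G, mk_sq]
    apply mk_ind_congr
    intro n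
    constructor
    · rintro ⟨m, rfl, k, rfl⟩; exact ⟨k, by ring⟩
    · rintro ⟨k, rfl⟩; exact ⟨3 * (2 * k + 1) ^ 2, by ring, k, rfl⟩
  have h4 : G ^ 4 = (G ^ 2) ^ 2 := by ring
  rw [h4, h2, mk_sq]
  apply mk_ind_congr
  intro n
  constructor
  · rintro ⟨m, rfl, k, rfl⟩; exact ⟨k, by ring⟩
  · rintro ⟨k, rfl⟩; exact ⟨6 * (2 * k + 1) ^ 2, by ring, k, rfl⟩

/-- The representation set: pairs `(a,b)` of odd numbers with `a² + 3b² = n`. -/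
noncomputable def U (n : ℕ) : Finset (ℕ × ℕ) :=
  (Finset.range (n + 1) ×ˢ Finset.range (n + 1)).filter
    fun q => q.1 % 2 = 1 ∧ q.2 % 2 = 1 ∧ q.1 ^ 2 + 3 * q.2 ^ 2 = n

lemma mem_U {n : ℕ} {q : ℕ × ℕ} :
    q ∈ U n ↔ q.1 % 2 = 1 ∧ q.2 % 2 = 1 ∧ q.1 ^ 2 + 3 * q.2 ^ 2 = n := by
  constructor
  · intro h
    simp only [U, Finset.mem_filter] at h
    exact h.2
  · intro h
    simp only [U, Finset.mem_filter, Finset.mem_product, Finset.mem_range]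
    refine ⟨⟨?_, ?_⟩, h⟩
    · have h1 : q.1 ≤ q.1 ^ 2 := Nat.le_self_pow two_ne_zero _
      omega
    · have h1 : q.2 ≤ q.2 ^ 2 := Nat.le_self_pow two_ne_zero _
      omega

lemma coeff_FG (n : ℕ) :
    PowerSeries.coeff n (F * G) = ∑ _q ∈ U n, (1 : ZMod 2) := by
  rw [PowerSeries.coeff_mul]
  have hterm : ∀ p : ℕ × ℕ,
      PowerSeries.coeff p.1 F * PowerSeries.coeff p.2 G =
        if (∃ k, p.1 = (2 * k + 1) ^ 2) ∧ (∃ k, p.2 = 3 * (2 * k + 1) ^ 2) then 1 else 0 := by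
    intro p
    rw [F, G, PowerSeries.coeff_mk, PowerSeries.coeff_mk]
    split_ifs with h1 h2 h3 h4 h5 <;> simp_all
  rw [Finset.sum_congr rfl fun p _ => hterm p, ← Finset.sum_filter]
  refine Finset.sum_bij' (fun p _ => (Nat.sqrt p.1, Nat.sqrt (p.2 / 3)))
    (fun q _ => (q.1 ^ 2, 3 * q.2 ^ 2)) ?_ ?_ ?_ ?_ ?_
  · -- i maps into U n
    intro p hp
    simp only [Finset.mem_filter, HasAntidiagonal.mem_antidiagonal] at hp
    obtain ⟨hsum, ⟨k, hk⟩, ⟨l, hl⟩⟩ := hp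
    have h1 : Nat.sqrt p.1 = 2 * k + 1 := by
      rw [hk, Nat.sqrt_eq']
    have h2 : Nat.sqrt (p.2 / 3) = 2 * l + 1 := by
      rw [hl, Nat.mul_div_cancel_left _ (by norm_num), Nat.sqrt_eq']
    rw [mem_U, h1, h2]
    dsimp only
    refine ⟨by omega, by omega, by omega⟩
  · -- j maps into the filtered antidiagonal
    intro q hq
    rw [mem_U] at hq
    obtain ⟨ha, hb, heq⟩ := hq
    simp only [Finset.mem_filter, HasAntidiagonal.mem_antidiagonal]
    have e1 : 2 * ((q.1 - 1) / 2) + 1 = q.1 := by omega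
    have e2 : 2 * ((q.2 - 1) / 2) + 1 = q.2 := by omega
    exact ⟨heq, ⟨(q.1 - 1) / 2, by rw [e1]⟩, ⟨(q.2 - 1) / 2, by rw [e2]⟩⟩
  · -- left inverse
    intro p hp
    simp only [Finset.mem_filter, HasAntidiagonal.mem_antidiagonal] at hp
    obtain ⟨hsum, ⟨k, hk⟩, ⟨l, hl⟩⟩ := hp
    dsimp only
    have h1 : Nat.sqrt p.1 = 2 * k + 1 := by
      rw [hk, Nat.sqrt_eq']
    have h2 : Nat.sqrt (p.2 / 3) = 2 * l + 1 := by
      rw [hl, Nat.mul_div_cancel_left _ (by norm_num), Nat.sqrt_eq']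
    rw [h1, h2]
    rw [Prod.ext_iff]
    exact ⟨hk.symm, hl.symm⟩
  · -- right inverse
    intro q hq
    rw [mem_U] at hq
    rw [Prod.ext_iff]
    constructor
    · simp only
      rw [Nat.sqrt_eq']
    · simp only
      rw [Nat.mul_div_cancel_left _ (by norm_num), Nat.sqrt_eq']
  · intro p hp
    rfl

/-- The Zagier-style involution. -/
def tau : ℕ × ℕ → ℕ × ℕ := fun q =>
  if (q.1 + q.2) / 2 % 2 = 1 then
    if 3 * q.2 ≤ q.1 then ((q.1 - 3 * q.2) / 2, (q.1 + q.2) / 2)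
    else ((3 * q.2 - q.1) / 2, (q.1 + q.2) / 2)
  else ((q.1 + 3 * q.2) / 2, if q.2 ≤ q.1 then (q.1 - q.2) / 2 else (q.2 - q.1) / 2)

lemma tau_tau {q : ℕ × ℕ} (ha : q.1 % 2 = 1) (hb : q.2 % 2 = 1) : tau (tau q) = q := by
  obtain ⟨a, b⟩ := q
  simp only at ha hb
  simp only [tau]
  split_ifs <;> simp_all [Prod.ext_iff] <;> omega

lemma tau_eq_self {q : ℕ × ℕ} (ha : q.1 % 2 = 1) (hb : q.2 % 2 = 1) :
    tau q = q ↔ (q.1 = q.2 ∨ q.1 = 3 * q.2) := by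
  obtain ⟨a, b⟩ := q
  simp only at ha hb
  simp only [tau]
  split_ifs <;> simp_all [Prod.ext_iff] <;> omega

lemma tau_spec {n : ℕ} {q : ℕ × ℕ} (hq : q ∈ U n) : tau q ∈ U n := by
  rw [mem_U] at hq ⊢
  obtain ⟨ha, hb, heq⟩ := hq
  obtain ⟨a, b⟩ := q
  simp only at ha hb heq
  simp only [tau]
  split_ifs with h1 h2 h3 <;> simp only
  · -- c odd, 3b ≤ a
    obtain ⟨u, hu⟩ : ∃ u, a = 3 * b + 2 * u := ⟨(a - 3 * b) / 2, by omega⟩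
    have e1 : (a - 3 * b) / 2 = u := by omega
    have e2 : (a + b) / 2 = 2 * b + u := by omega
    rw [e1, e2]
    refine ⟨by omega, by omega, ?_⟩
    have key : u ^ 2 + 3 * (2 * b + u) ^ 2 = a ^ 2 + 3 * b ^ 2 := by rw [hu]; ring
    omega
  · -- c odd, a < 3b
    obtain ⟨u, hu⟩ : ∃ u, 3 * b = a + 2 * u := ⟨(3 * b - a) / 2, by omega⟩
    have e1 : (3 * b - a) / 2 = u := by omega
    obtain ⟨v, hv⟩ : ∃ v, a + b = 2 * v := ⟨(a + b) / 2, by omega⟩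
    have e2 : (a + b) / 2 = v := by omega
    rw [e1, e2]
    refine ⟨by omega, by omega, ?_⟩
    have key : (u : ℤ) ^ 2 + 3 * v ^ 2 = (a : ℤ) ^ 2 + 3 * b ^ 2 := by
      have hu' : (u : ℤ) = 3 * v - 2 * a := by
        have h1 : (3 : ℤ) * b = a + 2 * u := by exact_mod_cast congrArg Nat.cast hu
        have h2 : (a : ℤ) + b = 2 * v := by exact_mod_cast congrArg Nat.cast hv
        omega
      have hb' : (b : ℤ) = 2 * v - a := by
        have h2 : (a : ℤ) + b = 2 * v := by exact_mod_cast congrArg Nat.cast hv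
        omega
      rw [hu', hb']
      ring
    have : u ^ 2 + 3 * v ^ 2 = a ^ 2 + 3 * b ^ 2 := by exact_mod_cast key
    omega
  · -- c even, b ≤ a
    obtain ⟨u, hu⟩ : ∃ u, a = b + 2 * u := ⟨(a - b) / 2, by omega⟩
    have e1 : (a - b) / 2 = u := by omega
    have e2 : (a + 3 * b) / 2 = 2 * b + u := by omega
    rw [e1, e2]
    refine ⟨by omega, by omega, ?_⟩
    have key : (2 * b + u) ^ 2 + 3 * u ^ 2 = a ^ 2 + 3 * b ^ 2 := by rw [hu]; ring
    omega
  · -- c even, a < b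
    obtain ⟨u, hu⟩ : ∃ u, b = a + 2 * u := ⟨(b - a) / 2, by omega⟩
    have e1 : (b - a) / 2 = u := by omega
    have e2 : (a + 3 * b) / 2 = 2 * a + 3 * u := by omega
    rw [e1, e2]
    refine ⟨by omega, by omega, ?_⟩
    have key : (2 * a + 3 * u) ^ 2 + 3 * u ^ 2 = a ^ 2 + 3 * b ^ 2 := by rw [hu]; ring
    omega

lemma no_sq_eq_three_sq {a b : ℕ} (hb : b ≠ 0) (h : a ^ 2 = 3 * b ^ 2) : False := by
  have ha : a ≠ 0 := by
    intro h0
    rw [h0] at h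
    simp at h
    omega
  have h3 : (a ^ 2).factorization 3 = (3 * b ^ 2).factorization 3 := by rw [h]
  rw [Nat.factorization_pow, Nat.factorization_mul (by norm_num) (pow_ne_zero _ hb),
    Nat.factorization_pow] at h3
  have hp : Nat.Prime 3 := by norm_num
  simp only [Finsupp.smul_apply, Finsupp.add_apply, smul_eq_mul] at h3
  rw [Nat.Prime.factorization_self hp] at h3
  omega

lemma sum_U (n : ℕ) : ∑ _q ∈ U n, (1 : ZMod 2) =
    (if ∃ k, n = 4 * (2 * k + 1) ^ 2 then 1 else 0) +
      (if ∃ k, n = 12 * (2 * k + 1) ^ 2 then 1 else 0) := by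
  rw [← Finset.sum_filter_add_sum_filter_not (U n) (fun q => q.1 = q.2 ∨ q.1 = 3 * q.2)]
  have hrest : ∑ _q ∈ (U n).filter (fun q => ¬(q.1 = q.2 ∨ q.1 = 3 * q.2)), (1 : ZMod 2) = 0 := by
    apply Finset.sum_involution (fun q _ => tau q)
    · intro q hq
      decide
    · intro q hq _
      simp only [Finset.mem_filter] at hq
      rw [mem_U] at hq
      intro h
      exact hq.2 ((tau_eq_self hq.1.1 hq.1.2.1).mp h)
    · intro q hq
      simp only [Finset.mem_filter] at hq ⊢
      have hU := hq.1
      have hmem := tau_spec hU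
      refine ⟨hmem, ?_⟩
      intro hfix
      rw [mem_U] at hmem hU
      have : tau (tau q) = tau q := (tau_eq_self hmem.1 hmem.2.1).mpr hfix
      rw [tau_tau hU.1 hU.2.1] at this
      exact hq.2 ((tau_eq_self hU.1 hU.2.1).mp this.symm)
    · intro q hq
      simp only [Finset.mem_filter] at hq
      rw [mem_U] at hq
      exact tau_tau hq.1.1 hq.1.2.1
  rw [hrest, add_zero]
  by_cases hA : ∃ k, n = 4 * (2 * k + 1) ^ 2
  · obtain ⟨k, rfl⟩ := hA
    have hB : ¬∃ l, 4 * (2 * k + 1) ^ 2 = 12 * (2 * l + 1) ^ 2 := by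
      rintro ⟨l, hl⟩
      exact no_sq_eq_three_sq (a := 2 * k + 1) (b := 2 * l + 1) (by omega) (by omega)
    rw [if_pos ⟨k, rfl⟩, if_neg hB]
    have hset : (U (4 * (2 * k + 1) ^ 2)).filter (fun q => q.1 = q.2 ∨ q.1 = 3 * q.2) =
        {(2 * k + 1, 2 * k + 1)} := by
      ext q
      simp only [Finset.mem_filter, Finset.mem_singleton, mem_U]
      constructor
      · rintro ⟨⟨ha, hb, heq⟩, hfix | hfix⟩
        · rw [hfix] at heq
          have : q.2 ^ 2 = (2 * k + 1) ^ 2 := by omega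
          have h2 : q.2 = 2 * k + 1 := Nat.pow_left_injective (by norm_num) this
          rw [Prod.ext_iff]
          exact ⟨by rw [hfix, h2], h2⟩
        · rw [hfix] at heq
          exfalso
          have : (2 * k + 1) ^ 2 = 3 * q.2 ^ 2 := by
            have e : (3 * q.2) ^ 2 = 9 * q.2 ^ 2 := by ring
            omega
          exact no_sq_eq_three_sq (by omega) this
      · rintro rfl
        refine ⟨⟨by omega, by omega, by ring⟩, Or.inl rfl⟩
    rw [hset, Finset.sum_singleton, add_zero]
  · by_cases hB : ∃ k, n = 12 * (2 * k + 1) ^ 2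
    · obtain ⟨k, rfl⟩ := hB
      rw [if_neg hA, if_pos ⟨k, rfl⟩]
      have hset : (U (12 * (2 * k + 1) ^ 2)).filter (fun q => q.1 = q.2 ∨ q.1 = 3 * q.2) =
          {(3 * (2 * k + 1), 2 * k + 1)} := by
        ext q
        simp only [Finset.mem_filter, Finset.mem_singleton, mem_U]
        constructor
        · rintro ⟨⟨ha, hb, heq⟩, hfix | hfix⟩
          · rw [hfix] at heq
            exfalso
            have : q.2 ^ 2 = 3 * (2 * k + 1) ^ 2 := by omega
            exact no_sq_eq_three_sq (by omega) this
          · rw [hfix] at heq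
            have e : (3 * q.2) ^ 2 = 9 * q.2 ^ 2 := by ring
            have : q.2 ^ 2 = (2 * k + 1) ^ 2 := by omega
            have h2 : q.2 = 2 * k + 1 := Nat.pow_left_injective (by norm_num) this
            rw [Prod.ext_iff]
            exact ⟨by rw [hfix, h2], h2⟩
        · rintro rfl
          refine ⟨⟨by omega, by omega, by ring⟩, Or.inr rfl⟩
      rw [hset, Finset.sum_singleton, zero_add]
    · rw [if_neg hA, if_neg hB]
      have hset : (U n).filter (fun q => q.1 = q.2 ∨ q.1 = 3 * q.2) = ∅ := by
        ext q
        simp only [Finset.mem_filter, Finset.notMem_empty, iff_false, not_and, mem_U]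
        rintro ⟨ha, hb, heq⟩ (hfix | hfix)
        · refine hA ⟨(q.2 - 1) / 2, ?_⟩
          rw [hfix] at heq
          have e2 : 2 * ((q.2 - 1) / 2) + 1 = q.2 := by omega
          rw [e2]
          omega
        · refine hB ⟨(q.2 - 1) / 2, ?_⟩
          rw [hfix] at heq
          have e : (3 * q.2) ^ 2 = 9 * q.2 ^ 2 := by ring
          have e2 : 2 * ((q.2 - 1) / 2) + 1 = q.2 := by omega
          rw [e2]
          omega
      rw [hset, Finset.sum_empty, add_zero]

end ProofAux

theorem stmt_0 : (F + G) ^ 4 = F * G := by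
  have h4 : (F + G) ^ 4 = F ^ 4 + G ^ 4 := by
    have : (4 : ℕ) = 2 ^ 2 := rfl
    rw [this, add_pow_char_pow]
  rw [h4]
  ext n
  rw [map_add, ProofAux.F_pow_four, ProofAux.G_pow_four, PowerSeries.coeff_mk,
    PowerSeries.coeff_mk, ProofAux.coeff_FG, ProofAux.sum_U]
end

section
/- Let F ∈ (Z/2)[[x]] be F = Σ_{k≥0} x^{(2k+1)^2} and G = F(x^3). Then F is algebraic of degree 4 over the field (Z/2)(G) = Frac((Z/2)[G]), i.e., the polynomial (X+G)^4 − XG ∈ (Z/2)(G)[X] is the minimal polynomial of F, and it is irreducible over (Z/2)(G). -/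
open scoped Classical

/-- The field of fractions of `(Z/2)[[x]]`. -/
noncomputable abbrev K : Type := FractionRing (PowerSeries (ZMod 2))

noncomputable def F' : K := algebraMap (PowerSeries (ZMod 2)) K F
noncomputable def G' : K := algebraMap (PowerSeries (ZMod 2)) K G

/-- The subfield `(Z/2)(G)` of `K` (note `Z/2` is the prime field, so it is
contained in every subfield). -/
noncomputable def E : Subfield K := Subfield.closure {G'}

noncomputable def g : E := ⟨G', Subfield.subset_closure rfl⟩

section Proof1
open Finset PowerSeries


def S2 (n : ℕ) : Finset (ℕ × ℕ) :=
  (Finset.range (n+1) ×ˢ Finset.range (n+1)).filter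
    (fun p => p.1 % 2 = 1 ∧ p.2 % 2 = 1 ∧ p.1^2 + 3*p.2^2 = n)

def iot (p : ℕ × ℕ) : ℕ × ℕ :=
  if (p.1 + p.2) % 4 = 2 then ((((p.1:ℤ) - 3*p.2).natAbs) / 2, (p.1+p.2)/2)
  else ((p.1 + 3*p.2)/2, (((p.1:ℤ) - p.2).natAbs) / 2)

lemma iot_norm (a b : ℕ) (ha : a % 2 = 1) (hb : b % 2 = 1) :
    (iot (a,b)).1 ^ 2 + 3 * (iot (a,b)).2 ^ 2 = a^2 + 3*b^2 := by
  unfold iot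
  split_ifs with h <;> simp only
  · set A := (((a:ℤ) - 3*b).natAbs) / 2 with hA
    set B := (a+b)/2 with hB
    have h1 : (2*(A:ℤ) = (a:ℤ)-3*b) ∨ (2*(A:ℤ) = -((a:ℤ)-3*b)) := by omega
    have h2 : (2*(B:ℤ)) = (a:ℤ)+b := by omega
    have key : (A:ℤ)^2 + 3*(B:ℤ)^2 = (a:ℤ)^2+3*(b:ℤ)^2 := by
      rcases h1 with h1|h1 <;> nlinarith [h1, h2]
    exact_mod_cast key
  · set A := (a + 3*b)/2 with hA
    set B := (((a:ℤ) - b).natAbs) / 2 with hB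
    have h1 : (2*(A:ℤ)) = (a:ℤ)+3*b := by omega
    have h2 : (2*(B:ℤ) = (a:ℤ)-b) ∨ (2*(B:ℤ) = -((a:ℤ)-b)) := by omega
    have key : (A:ℤ)^2 + 3*(B:ℤ)^2 = (a:ℤ)^2+3*(b:ℤ)^2 := by
      rcases h2 with h2|h2 <;> nlinarith [h1, h2]
    exact_mod_cast key

lemma iot_parity (a b : ℕ) (ha : a % 2 = 1) (hb : b % 2 = 1) :
    (iot (a,b)).1 % 2 = 1 ∧ (iot (a,b)).2 % 2 = 1 := by
  unfold iot; split_ifs with h <;> constructor <;> simp only <;> omega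

lemma iot_invol (a b : ℕ) (ha : a % 2 = 1) (hb : b % 2 = 1) :
    iot (iot (a,b)) = (a,b) := by
  unfold iot
  split_ifs with h1 h2 h3 <;> (refine Prod.ext ?_ ?_ <;> simp only <;> omega)

lemma iot_fix (a b : ℕ) (ha : a % 2 = 1) (hb : b % 2 = 1) :
    iot (a,b) = (a,b) ↔ (a = b ∨ a = 3*b) := by
  unfold iot
  constructor
  · intro he
    split_ifs at he with h <;> rw [Prod.ext_iff] at he <;> simp only at he <;> omega
  · intro he
    split_ifs with h <;> (refine Prod.ext ?_ ?_ <;> simp only <;> omega)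







lemma mem_S2 {n : ℕ} {p : ℕ × ℕ} :
    p ∈ S2 n ↔ p.1 % 2 = 1 ∧ p.2 % 2 = 1 ∧ p.1^2 + 3*p.2^2 = n := by
  simp only [S2, mem_filter, mem_product, mem_range]
  constructor
  · tauto
  · rintro ⟨h1, h2, h3⟩
    refine ⟨⟨?_, ?_⟩, h1, h2, h3⟩ <;> nlinarith

lemma no_sq_eq_3sq (m v : ℕ) (hm : m % 2 = 1) (hv : v % 2 = 1) (h : m^2 = 3*v^2) : False := by
  obtain ⟨u, rfl⟩ : ∃ u, m = 2*u+1 := ⟨(m-1)/2, by omega⟩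
  obtain ⟨w, rfl⟩ : ∃ w, v = 2*w+1 := ⟨(v-1)/2, by omega⟩
  have h2 : 4*(u*(u+1)) = 12*(w*(w+1)) + 2 := by nlinarith
  obtain ⟨U, hU⟩ := Nat.even_mul_succ_self u
  obtain ⟨W, hW⟩ := Nat.even_mul_succ_self w
  omega

lemma card_S2 (n : ℕ) : ((S2 n).card : ZMod 2) =
    (if ∃ m, m % 2 = 1 ∧ n = 4*m^2 then 1 else 0)
      + (if ∃ m, m % 2 = 1 ∧ n = 12*m^2 then 1 else 0) := by
  classical
  have hsplit := Finset.sum_filter_add_sum_filter_not (S2 n)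
    (fun p => p.1 = p.2 ∨ p.1 = 3*p.2) (fun _ => (1 : ZMod 2))
  have hzero : ∑ p ∈ (S2 n).filter (fun p => ¬(p.1 = p.2 ∨ p.1 = 3*p.2)), (1 : ZMod 2) = 0 := by
    refine Finset.sum_involution (fun p _ => iot p) (fun p _ => by decide) ?_ ?_ ?_
    · rintro ⟨a,b⟩ hp _
      simp only [mem_filter, mem_S2] at hp
      obtain ⟨⟨ha, hb, _⟩, hnf⟩ := hp
      intro he
      exact hnf ((iot_fix a b ha hb).mp he)
    · rintro ⟨a,b⟩ hp
      simp only [mem_filter, mem_S2] at hp ⊢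
      obtain ⟨⟨ha, hb, hn⟩, hnf⟩ := hp
      obtain ⟨ha', hb'⟩ := iot_parity a b ha hb
      have hn' := iot_norm a b ha hb
      refine ⟨⟨ha', hb', by omega⟩, ?_⟩
      intro hf
      have : iot (iot (a,b)) = iot (a,b) := by
        have := iot_fix (iot (a,b)).1 (iot (a,b)).2 ha' hb'
        rw [← this] at hf
        convert hf
      rw [iot_invol a b ha hb] at this
      exact hnf ((iot_fix a b ha hb).mp this.symm)
    · rintro ⟨a,b⟩ hp
      simp only [mem_filter, mem_S2] at hp
      exact iot_invol a b hp.1.1 hp.1.2.1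
  have hcard : ((S2 n).card : ZMod 2) = ∑ p ∈ S2 n, (1 : ZMod 2) := by
    rw [Finset.sum_const, nsmul_eq_mul, mul_one]
  rw [hcard, ← hsplit, hzero, add_zero]
  -- now compute the fixed-point sum
  by_cases h4 : ∃ m, m % 2 = 1 ∧ n = 4*m^2
  · obtain ⟨m, hm, rfl⟩ := h4
    by_cases h12 : ∃ m', m' % 2 = 1 ∧ 4*m^2 = 12*m'^2
    · exfalso
      obtain ⟨m', hm', he⟩ := h12
      exact no_sq_eq_3sq m m' hm hm' (by linarith)
    · rw [if_pos ⟨m, hm, rfl⟩, if_neg h12]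
      have : (S2 (4*m^2)).filter (fun p => p.1 = p.2 ∨ p.1 = 3*p.2) = {(m,m)} := by
        ext ⟨a,b⟩
        simp only [mem_filter, mem_S2, Finset.mem_singleton, Prod.mk.injEq]
        constructor
        · rintro ⟨⟨ha, hb, hn⟩, hf | hf⟩
          · subst hf
            have : a^2 = m^2 := by nlinarith
            have : a = m := Nat.pow_left_injective (by norm_num) this
            exact ⟨this, this⟩
          · subst hf
            exfalso
            exact no_sq_eq_3sq m b hm hb (by nlinarith)
        · rintro ⟨rfl, rfl⟩
          exact ⟨⟨hm, hm, by ring⟩, Or.inl rfl⟩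
      rw [this, Finset.sum_singleton]; norm_num
  · by_cases h12 : ∃ m, m % 2 = 1 ∧ n = 12*m^2
    · obtain ⟨m, hm, rfl⟩ := h12
      rw [if_neg h4, if_pos ⟨m, hm, rfl⟩]
      have : (S2 (12*m^2)).filter (fun p => p.1 = p.2 ∨ p.1 = 3*p.2) = {(3*m,m)} := by
        ext ⟨a,b⟩
        simp only [mem_filter, mem_S2, Finset.mem_singleton, Prod.mk.injEq]
        constructor
        · rintro ⟨⟨ha, hb, hn⟩, hf | hf⟩
          · subst hf
            exfalso
            exact no_sq_eq_3sq a m ha hm (by nlinarith)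
          · subst hf
            have : b^2 = m^2 := by nlinarith
            have hbm : b = m := Nat.pow_left_injective (by norm_num) this
            exact ⟨by rw [hbm], hbm⟩
        · rintro ⟨rfl, rfl⟩
          exact ⟨⟨by omega, hm, by ring⟩, Or.inr rfl⟩
      rw [this, Finset.sum_singleton]; norm_num
    · rw [if_neg h4, if_neg h12]
      have : (S2 n).filter (fun p => p.1 = p.2 ∨ p.1 = 3*p.2) = ∅ := by
        ext ⟨a,b⟩
        simp only [mem_filter, mem_S2, Finset.notMem_empty, iff_false]
        rintro ⟨⟨ha, hb, hn⟩, hf | hf⟩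
        · exact h4 ⟨a, ha, by subst hf; omega⟩
        · exact h12 ⟨b, hb, by subst hf; nlinarith⟩
      rw [this, Finset.sum_empty]; norm_num












lemma sq_coeff (φ : PowerSeries (ZMod 2)) (n : ℕ) :
    PowerSeries.coeff n (φ * φ)
      = if n % 2 = 0 then PowerSeries.coeff (n/2) φ else 0 := by
  classical
  rw [PowerSeries.coeff_mul]
  by_cases h : n % 2 = 0
  · rw [if_pos h]
    have hc : (n/2, n/2) ∈ Finset.HasAntidiagonal.antidiagonal n := by
      rw [Finset.HasAntidiagonal.mem_antidiagonal]; omega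
    rw [← Finset.sum_erase_add _ _ hc]
    have hz : ∑ p ∈ (Finset.HasAntidiagonal.antidiagonal n).erase (n/2, n/2),
        (coeff p.1) φ * (coeff p.2) φ = 0 := by
      refine Finset.sum_involution (fun p _ => (p.2, p.1)) ?_ ?_ ?_ ?_
      · intro p _
        rw [mul_comm]
        exact CharTwo.add_self_eq_zero _
      · rintro ⟨a,b⟩ hp _
        simp only [Finset.mem_erase, Finset.HasAntidiagonal.mem_antidiagonal] at hp
        intro he
        rw [Prod.ext_iff] at he
        simp only at he
        exact hp.1 (by rw [Prod.ext_iff]; constructor <;> simp <;> omega)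
      · rintro ⟨a,b⟩ hp
        simp only [Finset.mem_erase, Finset.HasAntidiagonal.mem_antidiagonal] at hp ⊢
        refine ⟨?_, by omega⟩
        intro he
        rw [Prod.ext_iff] at he
        simp only at he
        exact hp.1 (by rw [Prod.ext_iff]; constructor <;> simp <;> omega)
      · intro p _; rfl
    rw [hz, zero_add]
    have : ∀ x : ZMod 2, x * x = x := by decide
    exact this _
  · rw [if_neg h]
    refine Finset.sum_involution (fun p _ => (p.2, p.1)) ?_ ?_ ?_ ?_
    · intro p _
      rw [mul_comm]
      exact CharTwo.add_self_eq_zero _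
    · rintro ⟨a,b⟩ hp _
      simp only [Finset.HasAntidiagonal.mem_antidiagonal] at hp
      intro he
      rw [Prod.ext_iff] at he
      simp only at he
      omega
    · rintro ⟨a,b⟩ hp
      simp only [Finset.HasAntidiagonal.mem_antidiagonal] at hp ⊢
      omega
    · intro p _; rfl

lemma coeff_F4 (n : ℕ) : PowerSeries.coeff n (F^4)
    = if ∃ k, n = 4*(2*k+1)^2 then 1 else 0 := by
  have h4 : F^4 = (F*F)*(F*F) := by ring
  rw [h4, sq_coeff, ]
  by_cases h : n % 2 = 0
  · rw [if_pos h, sq_coeff]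
    by_cases h2 : (n/2) % 2 = 0
    · rw [if_pos h2, F, PowerSeries.coeff_mk]
      by_cases h3 : ∃ k, n/2/2 = (2*k+1)^2
      · obtain ⟨k, hk⟩ := h3
        rw [if_pos ⟨k, hk⟩, if_pos ⟨k, by omega⟩]
      · rw [if_neg h3, if_neg (fun ⟨k, hk⟩ => h3 ⟨k, by omega⟩)]
    · rw [if_neg h2, eq_comm, if_neg]
      rintro ⟨k, hk⟩
      have : (2*k+1)^2 % 2 = 1 := by
        have : ∃ j, (2*k+1)^2 = 2*j+1 := ⟨2*k^2+2*k, by ring⟩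
        omega
      omega
  · rw [if_neg h, eq_comm, if_neg]
    rintro ⟨k, hk⟩
    omega

lemma coeff_G4 (n : ℕ) : PowerSeries.coeff n (G^4)
    = if ∃ k, n = 12*(2*k+1)^2 then 1 else 0 := by
  have h4 : G^4 = (G*G)*(G*G) := by ring
  rw [h4, sq_coeff]
  by_cases h : n % 2 = 0
  · rw [if_pos h, sq_coeff]
    by_cases h2 : (n/2) % 2 = 0
    · rw [if_pos h2, G, PowerSeries.coeff_mk]
      by_cases h3 : ∃ k, n/2/2 = 3*(2*k+1)^2
      · obtain ⟨k, hk⟩ := h3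
        rw [if_pos ⟨k, hk⟩, if_pos ⟨k, by omega⟩]
      · rw [if_neg h3, if_neg (fun ⟨k, hk⟩ => h3 ⟨k, by omega⟩)]
    · rw [if_neg h2, eq_comm, if_neg]
      rintro ⟨k, hk⟩
      have : (2*k+1)^2 % 2 = 1 := by
        have : ∃ j, (2*k+1)^2 = 2*j+1 := ⟨2*k^2+2*k, by ring⟩
        omega
      omega
  · rw [if_neg h, eq_comm, if_neg]
    rintro ⟨k, hk⟩
    omega

lemma coeff_FG (n : ℕ) : PowerSeries.coeff n (F * G) = ((S2 n).card : ZMod 2) := by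
  classical
  rw [PowerSeries.coeff_mul]
  have step : ∀ p ∈ Finset.HasAntidiagonal.antidiagonal n,
      (coeff p.1) F * (coeff p.2) G
        = if (∃ j, p.1 = (2*j+1)^2) ∧ (∃ k, p.2 = 3*(2*k+1)^2) then 1 else 0 := by
    intro p _
    rw [F, G, PowerSeries.coeff_mk, PowerSeries.coeff_mk]
    split_ifs with h1 h2 h3 h4 h5 <;> simp_all
  rw [Finset.sum_congr rfl step, Finset.sum_boole]
  congr 1
  refine (Finset.card_bij (fun a _ => (a.1^2, 3*a.2^2)) ?_ ?_ ?_).symm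
  · rintro ⟨a,b⟩ ha
    rw [mem_S2] at ha
    obtain ⟨h1, h2, h3⟩ := ha
    dsimp only at h1 h2 h3 ⊢
    simp only [Finset.mem_filter, Finset.HasAntidiagonal.mem_antidiagonal]
    have e1 : 2*((a-1)/2)+1 = a := by omega
    have e2 : 2*((b-1)/2)+1 = b := by omega
    exact ⟨by omega, ⟨(a-1)/2, by rw [e1]⟩, ⟨(b-1)/2, by rw [e2]⟩⟩
  · rintro ⟨a,b⟩ ha ⟨c,d⟩ hc he
    rw [mem_S2] at ha hc
    rw [Prod.ext_iff] at he ⊢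
    simp only at he ⊢
    constructor
    · exact Nat.pow_left_injective (by norm_num) he.1
    · have : b^2 = d^2 := by omega
      exact Nat.pow_left_injective (by norm_num) this
  · rintro ⟨p,q⟩ hp
    simp only [Finset.mem_filter, Finset.HasAntidiagonal.mem_antidiagonal] at hp
    obtain ⟨hpq, ⟨j, rfl⟩, ⟨k, rfl⟩⟩ := hp
    refine ⟨(2*j+1, 2*k+1), ?_, rfl⟩
    rw [mem_S2]
    dsimp only
    exact ⟨by omega, by omega, by omega⟩

lemma FG_eq : F * G = F^4 + G^4 := by
  ext n
  rw [map_add, coeff_F4, coeff_G4, coeff_FG, card_S2]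
  congr 1
  · congr 1
    apply propext
    constructor
    · rintro ⟨m, hm, rfl⟩
      refine ⟨(m-1)/2, ?_⟩
      have e : 2*((m-1)/2)+1 = m := by omega
      rw [e]
    · rintro ⟨k, rfl⟩
      exact ⟨2*k+1, by omega, rfl⟩
  · congr 1
    apply propext
    constructor
    · rintro ⟨m, hm, rfl⟩
      refine ⟨(m-1)/2, ?_⟩
      have e : 2*((m-1)/2)+1 = m := by omega
      rw [e]
    · rintro ⟨k, rfl⟩
      exact ⟨2*k+1, by omega, rfl⟩














-- the evaluation map  (Z/2)[Y] → (Z/2)[[x]],  p ↦ p(G)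
noncomputable def χ : Polynomial (ZMod 2) →+* PowerSeries (ZMod 2) :=
  Polynomial.eval₂RingHom ((PowerSeries.C (R := ZMod 2))) G

lemma G_ne_zero : G ≠ 0 := by
  intro h
  have h3 : PowerSeries.coeff 3 G = 1 := by
    rw [G, PowerSeries.coeff_mk, if_pos ⟨0, by norm_num⟩]
  rw [h, map_zero] at h3
  exact one_ne_zero h3.symm

lemma constantCoeff_G : (PowerSeries.constantCoeff (R := ZMod 2)) G = 0 := by
  have : (PowerSeries.constantCoeff (R := ZMod 2)) G = PowerSeries.coeff 0 G := by
    rw [PowerSeries.coeff_zero_eq_constantCoeff]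
  rw [this, G, PowerSeries.coeff_mk, if_neg]
  rintro ⟨k, hk⟩
  have : (2*k+1)^2 > 0 := by positivity
  omega

lemma χ_injective : Function.Injective χ := by
  rw [injective_iff_map_eq_zero]
  intro p hp
  by_contra hpne
  obtain ⟨q, hq, hqnd⟩ := Polynomial.exists_eq_pow_rootMultiplicity_mul_and_not_dvd p hpne 0
  rw [map_zero, sub_zero] at hq hqnd
  rw [hq, map_mul, map_pow] at hp
  have hX : χ Polynomial.X = G := by
    simp [χ, Polynomial.eval₂RingHom]
  have hq0 : Polynomial.coeff q 0 ≠ 0 := by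
    rwa [Polynomial.X_dvd_iff] at hqnd
  have hcc : (PowerSeries.constantCoeff (R := ZMod 2)) (χ q) = Polynomial.coeff q 0 := by
    show ((PowerSeries.constantCoeff (R := ZMod 2))) (Polynomial.eval₂ ((PowerSeries.C (R := ZMod 2))) G q) = _
    rw [Polynomial.hom_eval₂, constantCoeff_G, Polynomial.eval₂_at_zero]
    have : ((PowerSeries.constantCoeff (R := ZMod 2))).comp ((PowerSeries.C (R := ZMod 2))) = RingHom.id _ := by
      ext a
      simp
    rw [this]
    rfl
  have hχq : χ q ≠ 0 := fun h => hq0 (by rw [h, map_zero] at hcc; exact hcc.symm)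
  have hGpow : (χ Polynomial.X) ^ Polynomial.rootMultiplicity 0 p ≠ 0 := by
    rw [hX]
    exact pow_ne_zero _ G_ne_zero
  exact (mul_ne_zero hGpow hχq) hp

noncomputable def φ : Polynomial (ZMod 2) →+* K :=
  (algebraMap (PowerSeries (ZMod 2)) K).comp χ

lemma φ_injective : Function.Injective φ :=
  (IsFractionRing.injective (PowerSeries (ZMod 2)) K).comp χ_injective

lemma φ_X : φ Polynomial.X = G' := by
  simp [φ, χ, G', Polynomial.eval₂RingHom]

noncomputable def ψ : RatFunc (ZMod 2) →+* K := IsFractionRing.lift φ_injective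

lemma ψ_X : ψ RatFunc.X = G' := by
  rw [← RatFunc.algebraMap_X, ψ, IsFractionRing.lift_algebraMap, φ_X]

lemma φ_mem_E (p : Polynomial (ZMod 2)) : φ p ∈ E := by
  induction p using Polynomial.induction_on with
  | C a =>
    have h01 : ∀ b : ZMod 2, b = 0 ∨ b = 1 := by decide
    rcases h01 a with rfl | rfl
    · rw [map_zero, map_zero]; exact zero_mem E
    · rw [map_one, map_one]; exact one_mem E
  | add p q hp hq => rw [map_add]; exact add_mem hp hq
  | monomial n a ha =>
    rw [map_mul, map_pow, φ_X] at *
    rw [pow_succ, ← mul_assoc]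
    exact mul_mem ha (Subfield.subset_closure rfl)

lemma ψ_mem_E (z : RatFunc (ZMod 2)) : ψ z ∈ E := by
  obtain ⟨p, q, hq, rfl⟩ := IsFractionRing.div_surjective (A := Polynomial (ZMod 2)) z
  rw [map_div₀, ψ, IsFractionRing.lift_algebraMap, IsFractionRing.lift_algebraMap]
  exact div_mem (φ_mem_E p) (φ_mem_E q)

noncomputable def ψE : RatFunc (ZMod 2) →+* E := ψ.codRestrict E ψ_mem_E

lemma ψE_bijective : Function.Bijective ψE := by
  constructor
  · intro a b h
    apply ψ.injective
    exact congrArg Subtype.val h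
  · -- surjective: E is the smallest subfield containing G', and range of ψ is a subfield containing G'
    intro ⟨x, hx⟩
    have hrange : E ≤ ψ.fieldRange := by
      rw [E]
      apply Subfield.closure_le.mpr
      rintro y rfl
      exact ⟨RatFunc.X, ψ_X⟩
    obtain ⟨z, hz⟩ := hrange hx
    exact ⟨z, Subtype.ext hz⟩

noncomputable def eqv : RatFunc (ZMod 2) ≃+* E := RingEquiv.ofBijective ψE ψE_bijective

lemma eqv_X : eqv RatFunc.X = g := by
  apply Subtype.ext
  show ψ RatFunc.X = G'
  exact ψ_X


end Proof1

section Proof2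
open Polynomial

noncomputable abbrev L : Type := RatFunc (ZMod 2)
noncomputable def t : L := RatFunc.X
noncomputable def qL : Polynomial L := (X + C t)^4 - X * C t

noncomputable def q₀ : Polynomial (Polynomial (ZMod 2)) :=
  X^4 + C Polynomial.X * X + C (Polynomial.X^4)

instance charL : CharP L 2 :=
  charP_of_injective_ringHom (IsFractionRing.injective (Polynomial (ZMod 2)) L) 2

lemma char2_pow4 {R : Type*} [CommRing R] [CharP R 2] (x y : R) : (x + y)^4 = x^4 + y^4 := by
  have h : ∀ a b : R, (a + b)^2 = a^2 + b^2 := fun a b => add_pow_char a b 2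
  calc (x+y)^4 = ((x+y)^2)^2 := by ring
    _ = (x^2 + y^2)^2 := by rw [h]
    _ = (x^2)^2 + (y^2)^2 := h _ _
    _ = x^4 + y^4 := by ring

lemma qL_eq : qL = X^4 + C t * X + C (t^4) := by
  rw [qL, CharTwo.sub_eq_add, char2_pow4]
  ring_nf
  rw [map_pow]

lemma qL_map : qL = q₀.map (algebraMap (Polynomial (ZMod 2)) L) := by
  rw [qL_eq, q₀]
  simp only [Polynomial.map_add, Polynomial.map_pow, Polynomial.map_mul, Polynomial.map_X,
    Polynomial.map_C, map_pow, RatFunc.algebraMap_X]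
  rw [t]
lemma q₀_monic : q₀.Monic := by
  unfold q₀
  monicity!

lemma qL_monic : qL.Monic := by
  rw [qL_map]
  exact q₀_monic.map _

lemma tpow : ∀ x : ZMod 2, x^4 = x := by decide

-- no root in the polynomial ring
lemma no_poly_root (s : Polynomial (ZMod 2)) :
    s^4 + Polynomial.X * s + Polynomial.X^4 ≠ 0 := by
  intro h
  by_cases hd : s.natDegree ≤ 1
  · set a := s.coeff 1 with ha
    set b := s.coeff 0 with hb
    have hs : s = C a * Polynomial.X + C b := Polynomial.eq_X_add_C_of_natDegree_le_one hd
    have hs4 : s^4 = C a * Polynomial.X^4 + C b := by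
      rw [hs, char2_pow4]
      rw [mul_pow, ← map_pow, ← map_pow, tpow, tpow]
    have hxs : Polynomial.X * s = C a * Polynomial.X^2 + C b * Polynomial.X := by
      rw [hs]; ring
    rw [hs4, hxs] at h
    have h2 := congrArg (fun p => Polynomial.coeff p 2) h
    have h4 := congrArg (fun p => Polynomial.coeff p 4) h
    simp [Polynomial.coeff_add, Polynomial.coeff_C_mul, Polynomial.coeff_X_pow,
      Polynomial.coeff_C, Polynomial.coeff_X] at h2 h4
    rw [h2] at h4
    simp at h4
  · push_neg at hd
    have hs0 : s ≠ 0 := by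
      intro h0
      rw [h0] at hd
      simp at hd
    have h' : s^4 = Polynomial.X * s + Polynomial.X^4 := by
      have : s^4 = -(Polynomial.X * s + Polynomial.X^4) := by linear_combination h
      rwa [CharTwo.neg_eq] at this
    have hd4 : (s^4).natDegree = 4 * s.natDegree := Polynomial.natDegree_pow s 4
    have hdr : (Polynomial.X * s + Polynomial.X^4).natDegree ≤ max (1 + s.natDegree) 4 := by
      refine le_trans (Polynomial.natDegree_add_le _ _) ?_
      apply max_le_max
      · refine le_trans (Polynomial.natDegree_mul_le) ?_
        simp [Polynomial.natDegree_X]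
      · simp
    rw [h'] at hd4
    omega

lemma no_root (r : L) : Polynomial.eval r qL ≠ 0 := by
  intro h
  have hint : IsIntegral (Polynomial (ZMod 2)) r := by
    refine ⟨q₀, q₀_monic, ?_⟩
    rw [Polynomial.eval₂_eq_eval_map, ← qL_map]
    exact h
  obtain ⟨s, hs⟩ := IsIntegrallyClosed.isIntegral_iff.mp hint
  rw [← hs, qL_map, Polynomial.eval_map, Polynomial.eval₂_hom] at h
  have h0 : Polynomial.eval s q₀ = 0 := by
    have := (map_eq_zero_iff _ (IsFractionRing.injective (Polynomial (ZMod 2)) L)).mp h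
    exact this
  rw [q₀] at h0
  simp only [Polynomial.eval_add, Polynomial.eval_pow, Polynomial.eval_mul, Polynomial.eval_X,
    Polynomial.eval_C] at h0
  exact no_poly_root s (by linear_combination h0)

lemma no_cube_root (a : L) : a^3 ≠ t := by
  intro h
  have hint : IsIntegral (Polynomial (ZMod 2)) a := by
    refine ⟨X^3 - C Polynomial.X, Polynomial.monic_X_pow_sub_C _ (by norm_num), ?_⟩
    · simp only [Polynomial.eval₂_sub, Polynomial.eval₂_pow, Polynomial.eval₂_X, Polynomial.eval₂_C]
      rw [h, t, ← RatFunc.algebraMap_X]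
      exact sub_self _
  obtain ⟨s, hs⟩ := IsIntegrallyClosed.isIntegral_iff.mp hint
  rw [← hs, ← map_pow, t, ← RatFunc.algebraMap_X] at h
  have h0 : s^3 = Polynomial.X := IsFractionRing.injective (Polynomial (ZMod 2)) L h
  have := congrArg Polynomial.natDegree h0
  rw [Polynomial.natDegree_pow, Polynomial.natDegree_X] at this
  omega

lemma quad_eq (f : Polynomial L) (hm : f.Monic) (hd : f.natDegree = 2) :
    f = X^2 + C (f.coeff 1) * X + C (f.coeff 0) := by
  have h2 : f.coeff 2 = 1 := by
    have := hm.coeff_natDegree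
    rwa [hd] at this
  have hgt : ∀ n, 2 < n → f.coeff n = 0 := fun n hn =>
    Polynomial.coeff_eq_zero_of_natDegree_lt (by omega)
  ext n
  rcases n with _|n
  · simp
  rcases n with _|n
  · simp [Polynomial.coeff_X_pow]
  rcases n with _|n
  · simp [Polynomial.coeff_X_pow, h2]
  · rw [hgt (n+1+1+1) (by omega)]
    have e1 : ¬(n+1+1+1 = 2) := by omega
    have e2 : ¬(1 = n+1+1+1) := by omega
    have e3 : ¬(n+1+1+1 = 0) := by omega
    have e4 : ¬(n+1+1+1 = 1) := by omega
    have e5 : ¬(2 = n+1+1+1) := by omega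
    have e6 : ¬(0 = n+1+1+1) := by omega
    simp [Polynomial.coeff_X_pow, Polynomial.coeff_C, Polynomial.coeff_X, e1, e2, e3, e4, e5, e6]

lemma no_quad_factor (f g : Polynomial L) (hf : f.Monic) (hg : g.Monic)
    (hf2 : f.natDegree = 2) (hg2 : g.natDegree = 2) (h : qL = f * g) : False := by
  set a := f.coeff 1 with ha
  set b := f.coeff 0 with hb
  set c := g.coeff 1 with hc
  set d := g.coeff 0 with hd
  rw [quad_eq f hf hf2, quad_eq g hg hg2, ← ha, ← hb, ← hc, ← hd, qL_eq] at h
  have h3 := congrArg (fun p => Polynomial.coeff p 3) h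
  have h2 := congrArg (fun p => Polynomial.coeff p 2) h
  have h1 := congrArg (fun p => Polynomial.coeff p 1) h
  have expand : (X^2 + C a * X + C b) * (X^2 + C c * X + C d) =
      X^4 + C (a + c) * X^3 + C (b + d + a*c) * X^2 + C (a*d + b*c) * X + C (b*d) := by
    simp only [map_add, map_mul]
    ring
  rw [expand] at h3 h2 h1
  simp only [Polynomial.coeff_add, Polynomial.coeff_C_mul, Polynomial.coeff_X_pow,
    Polynomial.coeff_C, Polynomial.coeff_X] at h3 h2 h1
  norm_num at h3 h2 h1
  have hca : c = a := by
    have hc' : c = -a := eq_neg_of_add_eq_zero_right h3.symm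
    rwa [CharTwo.neg_eq] at hc'
  have hbd : b + d = a * a := by
    have hb' : b + d = -(a*c) := by linear_combination -h2
    rwa [hca, CharTwo.neg_eq] at hb'
  rw [hca] at h1
  have ht : a^3 = t := by
    rw [h1]
    linear_combination (-a) * hbd
  exact no_cube_root a ht

lemma qL_natDegree : qL.natDegree = 4 := by
  rw [qL_eq]
  compute_degree!

lemma qL_irreducible : Irreducible qL := by
  have hdeg := qL_natDegree
  have hqL0 : qL ≠ 0 := qL_monic.ne_zero
  constructor
  · intro hu
    have hd := Polynomial.isUnit_iff_degree_eq_zero.mp hu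
    rw [Polynomial.degree_eq_natDegree hqL0, hdeg] at hd
    norm_num at hd
  · rintro f g hfg
    by_contra hc
    push_neg at hc
    obtain ⟨hfu, hgu⟩ := hc
    have hf0 : f ≠ 0 := fun h0 => hqL0 (by rw [hfg, h0, zero_mul])
    have hg0 : g ≠ 0 := fun h0 => hqL0 (by rw [hfg, h0, mul_zero])
    have hsum : f.natDegree + g.natDegree = 4 := by
      rw [← Polynomial.natDegree_mul hf0 hg0, ← hfg, hdeg]
    have hf1 : 1 ≤ f.natDegree := by
      rcases Nat.eq_zero_or_pos f.natDegree with h0 | h; swap; · exact h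
      exact absurd (Polynomial.isUnit_iff_degree_eq_zero.mpr
        (by rw [Polynomial.degree_eq_natDegree hf0, h0]; rfl)) hfu
    have hg1 : 1 ≤ g.natDegree := by
      rcases Nat.eq_zero_or_pos g.natDegree with h0 | h; swap; · exact h
      exact absurd (Polynomial.isUnit_iff_degree_eq_zero.mpr
        (by rw [Polynomial.degree_eq_natDegree hg0, h0]; rfl)) hgu
    have hnoroot : ∀ p : Polynomial L, p ∣ qL → p.natDegree = 1 → False := by
      intro p hdvd hp1
      have hp0 : p ≠ 0 := fun h0 => by simp [h0] at hp1
      have hlc : p.coeff 1 ≠ 0 := by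
        have hl := Polynomial.leadingCoeff_ne_zero.mpr hp0
        rwa [Polynomial.leadingCoeff, hp1] at hl
      set r := -(p.coeff 0) / p.coeff 1 with hr
      have hroot : p.eval r = 0 := by
        conv_lhs => rw [Polynomial.eq_X_add_C_of_natDegree_le_one (le_of_eq hp1)]
        simp only [Polynomial.eval_add, Polynomial.eval_mul, Polynomial.eval_C, Polynomial.eval_X, hr]
        field_simp
        ring
      obtain ⟨u, hu⟩ := hdvd
      apply no_root r
      rw [hu, Polynomial.eval_mul, hroot, zero_mul]
    have hcases : f.natDegree = 1 ∨ f.natDegree = 2 ∨ f.natDegree = 3 := by omega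
    rcases hcases with h1 | h2 | h3
    · exact hnoroot f ⟨g, hfg⟩ h1
    · have hg2 : g.natDegree = 2 := by omega
      have hlcfg : f.leadingCoeff * g.leadingCoeff = 1 := by
        have hl := congrArg Polynomial.leadingCoeff hfg
        rw [Polynomial.leadingCoeff_mul, qL_monic.leadingCoeff] at hl
        exact hl.symm
      have hlcg0 : g.leadingCoeff ≠ 0 := Polynomial.leadingCoeff_ne_zero.mpr hg0
      have hlcf0 : f.leadingCoeff ≠ 0 := Polynomial.leadingCoeff_ne_zero.mpr hf0
      set f1 := C (g.leadingCoeff) * f with hf1e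
      set g1 := C (f.leadingCoeff) * g with hg1e
      have hfg1 : qL = f1 * g1 := by
        rw [hfg, hf1e, hg1e]
        calc f * g = C (g.leadingCoeff * f.leadingCoeff) * (f * g) := by
              rw [mul_comm (g.leadingCoeff), hlcfg, map_one, one_mul]
          _ = C (g.leadingCoeff) * f * (C (f.leadingCoeff) * g) := by
              rw [map_mul]; ring
      have hm1 : f1.Monic := by
        rw [Polynomial.Monic, hf1e, Polynomial.leadingCoeff_mul, Polynomial.leadingCoeff_C,
          mul_comm]
        exact hlcfg
      have hm2 : g1.Monic := by
        rw [Polynomial.Monic, hg1e, Polynomial.leadingCoeff_mul, Polynomial.leadingCoeff_C]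
        exact hlcfg
      have hd1 : f1.natDegree = 2 := by
        rw [hf1e, Polynomial.natDegree_C_mul hlcg0, h2]
      have hd2 : g1.natDegree = 2 := by
        rw [hg1e, Polynomial.natDegree_C_mul hlcf0, hg2]
      exact no_quad_factor f1 g1 hm1 hm2 hd1 hd2 hfg1
    · have hg3 : g.natDegree = 1 := by omega
      exact hnoroot g ⟨f, by rw [hfg]; ring⟩ hg3


noncomputable def qE : Polynomial E := (Polynomial.X + Polynomial.C g)^4 - Polynomial.X * Polynomial.C g

lemma map_qL : (Polynomial.mapEquiv eqv) qL = qE := by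
  rw [qL, qE, t]
  simp only [Polynomial.mapEquiv_apply, Polynomial.map_sub, Polynomial.map_pow,
    Polynomial.map_add, Polynomial.map_mul, Polynomial.map_X, Polynomial.map_C]
  simp [eqv_X]

lemma qE_irreducible : Irreducible qE := by
  rw [← map_qL]
  exact (MulEquiv.irreducible_iff (Polynomial.mapEquiv eqv)).mpr qL_irreducible

lemma qE_monic : qE.Monic := by
  rw [← map_qL, Polynomial.mapEquiv_apply]
  exact qL_monic.map _

instance charPS : CharP (PowerSeries (ZMod 2)) 2 :=
  charP_of_injective_ringHom (f := ((PowerSeries.C (R := ZMod 2)))) (fun a b h => by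
    have := congrArg ((PowerSeries.constantCoeff (R := ZMod 2))) h
    simpa using this) 2

lemma hFG' : (F' + G')^4 = F' * G' := by
  have hc : ((F+G)^4 : PowerSeries (ZMod 2)) = F*G := by
    rw [char2_pow4, FG_eq]
  have h2 := congrArg (algebraMap (PowerSeries (ZMod 2)) K) hc
  rw [map_pow, map_add, map_mul] at h2
  exact h2

set_option synthInstance.maxHeartbeats 1000000 in
set_option maxHeartbeats 1000000 in
lemma aeval_qE : Polynomial.aeval F' qE = 0 := by
  rw [qE]
  simp only [map_sub, map_pow, map_add, map_mul, Polynomial.aeval_X, Polynomial.aeval_C]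
  have hg : algebraMap E K g = G' := rfl
  rw [hg, hFG', sub_self]

end Proof2

open Polynomial in
/-- The minimal polynomial of `F` over `(Z/2)(G)` is `(X+G)^4 - XG`, which is
irreducible; in particular `F` has degree 4 over `(Z/2)(G)`. -/
theorem stmt_2 :
    Irreducible ((X + C g) ^ 4 - X * C g) ∧
    minpoly E F' = (X + C g) ^ 4 - X * C g := by
  refine ⟨qE_irreducible, ?_⟩
  exact (minpoly.eq_of_irreducible_of_monic qE_irreducible aeval_qE qE_monic).symm
end

section
/- Let k be a field, and let M be a k[[X,Y]]-module with a k-basis {m_{i,j}} indexed by ℕ×ℕ that is adapted to X and Y, meaning X·m_{i,j} = m_{i−1,j} (and 0 if i = 0) and Y·m_{i,j} = m_{i,j−1} (and 0 if j = 0). Then for every nonzero u ∈ k[[X,Y]], multiplication by u is surjective on M: uM = M. -/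
open MvPowerSeries

lemma aux_decomp (d : Fin 2 →₀ ℕ) :
    d = Finsupp.single 0 (d 0) + Finsupp.single 1 (d 1) := by
  ext x
  fin_cases x <;> simp

lemma aux_split {k : Type*} [Field k] (v : MvPowerSeries (Fin 2) k) (i j : ℕ)
    (h : ∀ d : Fin 2 →₀ ℕ, d 0 ≤ i → d 1 ≤ j → coeff d v = 0) :
    ∃ w1 w2 : MvPowerSeries (Fin 2) k,
      v = w1 * X 0 ^ (i + 1) + w2 * X 1 ^ (j + 1) := by
  classical
  set v1 : MvPowerSeries (Fin 2) k :=
    (fun d => if i < d 0 then coeff d v else 0 : (Fin 2 →₀ ℕ) → k) with hv1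
  have hc1 : ∀ d, coeff d v1 = if i < d 0 then coeff d v else 0 := fun d => rfl
  have h1 : (X 0 : MvPowerSeries (Fin 2) k) ^ (i + 1) ∣ v1 := by
    rw [X_pow_dvd_iff]
    intro m hm
    rw [hc1, if_neg (by omega)]
  have h2 : (X 1 : MvPowerSeries (Fin 2) k) ^ (j + 1) ∣ (v - v1) := by
    rw [X_pow_dvd_iff]
    intro m hm
    rw [map_sub, hc1]
    by_cases hm0 : i < m 0
    · rw [if_pos hm0]; ring
    · rw [if_neg hm0, h m (by omega) (by omega), sub_zero]
  obtain ⟨w1, hw1⟩ := h1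
  obtain ⟨w2, hw2⟩ := h2
  exact ⟨w1, w2, by rw [mul_comm w1, mul_comm w2, ← hw1, ← hw2]; ring⟩

theorem stmt_4 (k : Type*) [Field k] (M : Type*) [AddCommGroup M]
    [Module (MvPowerSeries (Fin 2) k) M] [Module k M]
    [IsScalarTower k (MvPowerSeries (Fin 2) k) M]
    (b : Module.Basis (ℕ × ℕ) k M)
    (hX : ∀ i j : ℕ, (X 0 : MvPowerSeries (Fin 2) k) • b (i, j) =
      if i = 0 then 0 else b (i - 1, j))
    (hY : ∀ i j : ℕ, (X 1 : MvPowerSeries (Fin 2) k) • b (i, j) =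
      if j = 0 then 0 else b (i, j - 1))
    (u : MvPowerSeries (Fin 2) k) (hu : u ≠ 0) :
    ∀ m : M, ∃ m' : M, u • m' = m := by
  classical
  -- commuting of k-scalars past power-series scalars
  have hcom : ∀ (v : MvPowerSeries (Fin 2) k) (c : k) (x : M),
      v • (c • x) = c • (v • x) := by
    intro v c x
    rw [← IsScalarTower.algebraMap_smul (MvPowerSeries (Fin 2) k) c x, ← mul_smul,
      mul_comm, mul_smul, IsScalarTower.algebraMap_smul]
  -- powers of X act by shifting
  have hXpow : ∀ (a i j : ℕ), (X 0 : MvPowerSeries (Fin 2) k) ^ a • b (i, j)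
      = if a ≤ i then b (i - a, j) else 0 := by
    intro a
    induction a with
    | zero => intro i j; simp
    | succ a ih =>
      intro i j
      rw [pow_succ, mul_smul, hX i j]
      cases i with
      | zero => simp
      | succ i =>
        rw [if_neg (Nat.succ_ne_zero i), Nat.succ_sub_one, ih]
        by_cases h : a ≤ i
        · rw [if_pos h, if_pos (by omega)]
          congr 2
          omega
        · rw [if_neg h, if_neg (by omega)]
  have hYpow : ∀ (t i j : ℕ), (X 1 : MvPowerSeries (Fin 2) k) ^ t • b (i, j)
      = if t ≤ j then b (i, j - t) else 0 := by
    intro t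
    induction t with
    | zero => intro i j; simp
    | succ t ih =>
      intro i j
      rw [pow_succ, mul_smul, hY i j]
      cases j with
      | zero => simp
      | succ j =>
        rw [if_neg (Nat.succ_ne_zero j), Nat.succ_sub_one, ih]
        by_cases h : t ≤ j
        · rw [if_pos h, if_pos (by omega)]
          congr 2
          omega
        · rw [if_neg h, if_neg (by omega)]
  -- monomials act by shifting
  have hmon : ∀ (s t i j : ℕ) (c : k),
      (monomial (Finsupp.single 0 s + Finsupp.single 1 t) c :
        MvPowerSeries (Fin 2) k) • b (i, j)
        = if s ≤ i ∧ t ≤ j then c • b (i - s, j - t) else 0 := by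
    intro s t i j c
    have h1 : (monomial (Finsupp.single 0 s + Finsupp.single 1 t) c :
        MvPowerSeries (Fin 2) k)
        = c • ((X 0 : MvPowerSeries (Fin 2) k) ^ s * (X 1) ^ t) := by
      rw [X_pow_eq, X_pow_eq, monomial_mul_monomial, one_mul]
      rw [← map_smul, smul_eq_mul, mul_one]
    rw [h1, smul_assoc, mul_smul, hYpow]
    by_cases ht : t ≤ j
    · rw [if_pos ht, hXpow]
      by_cases hs : s ≤ i
      · rw [if_pos hs, if_pos ⟨hs, ht⟩]
      · rw [if_neg hs, if_neg (by tauto), smul_zero]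
    · rw [if_neg ht, if_neg (by tauto), smul_zero, smul_zero]
  -- the key formula for the action of u on basis vectors
  have key : ∀ (i j : ℕ),
      u • b (i, j) = ∑ p ∈ Finset.range (i + 1) ×ˢ Finset.range (j + 1),
        (coeff (Finsupp.single 0 p.1 + Finsupp.single 1 p.2) u) •
          b (i - p.1, j - p.2) := by
    intro i j
    set P : MvPowerSeries (Fin 2) k :=
      ∑ p ∈ Finset.range (i + 1) ×ˢ Finset.range (j + 1),
        monomial (Finsupp.single 0 p.1 + Finsupp.single 1 p.2)
          (coeff (Finsupp.single 0 p.1 + Finsupp.single 1 p.2) u) with hP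
    have hcoeffP : ∀ d : Fin 2 →₀ ℕ, d 0 ≤ i → d 1 ≤ j →
        coeff d P = coeff d u := by
      intro d h0 h1
      rw [hP, map_sum, Finset.sum_eq_single (d 0, d 1)]
      · rw [coeff_monomial, if_pos (aux_decomp d), ← aux_decomp d]
      · intro p hp hpd
        rw [coeff_monomial, if_neg]
        intro hd
        apply hpd
        have e0 := DFunLike.congr_fun hd (0 : Fin 2)
        have e1 := DFunLike.congr_fun hd (1 : Fin 2)
        simp only [Finsupp.add_apply, Finsupp.single_apply] at e0 e1
        simp at e0 e1
        ext
        · simp [← e0]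
        · simp [← e1]
      · intro hd
        exact absurd (Finset.mk_mem_product (Finset.mem_range.2 (by omega))
          (Finset.mem_range.2 (by omega))) hd
    obtain ⟨w1, w2, hw⟩ := aux_split (u - P) i j
      (fun d h0 h1 => by rw [map_sub, hcoeffP d h0 h1, sub_self])
    have hz : (u - P) • b (i, j) = 0 := by
      rw [hw, add_smul, mul_smul, mul_smul, hXpow, hYpow,
        if_neg (by omega), if_neg (by omega), smul_zero, smul_zero, add_zero]
    have hup : u • b (i, j) = P • b (i, j) := by
      have h' := sub_smul u P (b (i, j))
      rw [hz] at h'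
      exact sub_eq_zero.mp h'.symm
    rw [hup, hP, Finset.sum_smul]
    refine Finset.sum_congr rfl fun p hp => ?_
    obtain ⟨hp1, hp2⟩ := Finset.mem_product.mp hp
    rw [Finset.mem_range] at hp1 hp2
    rw [hmon, if_pos ⟨by omega, by omega⟩]
  -- the submodule of elements hit by u • ·
  let L : M →ₗ[k] M :=
    { toFun := fun x => u • x
      map_add' := fun x y => smul_add u x y
      map_smul' := fun c x => hcom u c x }
  set N : Submodule k M := LinearMap.range L with hN
  have wf : WellFounded (Prod.Lex ((· < ·) : ℕ → ℕ → Prop) ((· < ·) : ℕ → ℕ → Prop)) :=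
    WellFounded.prod_lex wellFounded_lt wellFounded_lt
  set S : Set (ℕ × ℕ) :=
    {p | coeff (Finsupp.single 0 p.1 + Finsupp.single 1 p.2) u ≠ 0} with hSdef
  have hS : S.Nonempty := by
    by_contra h
    rw [Set.not_nonempty_iff_eq_empty] at h
    apply hu
    ext d
    have hd : (d 0, d 1) ∉ S := by rw [h]; exact Set.notMem_empty _
    simp only [hSdef, Set.mem_setOf_eq, not_not] at hd
    rw [← aux_decomp d] at hd
    simpa using hd
  set pq := wf.min S hS with hpq
  have hpqS : pq ∈ S := wf.min_mem S hS
  have hmin : ∀ q ∈ S, ¬ Prod.Lex ((· < ·) : ℕ → ℕ → Prop) (· < ·) q pq :=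
    fun q hq => wf.not_lt_min S hq
  have hc0 : coeff (Finsupp.single 0 pq.1 + Finsupp.single 1 pq.2) u ≠ 0 := hpqS
  have main : ∀ p : ℕ × ℕ, b p ∈ N := by
    intro p
    induction p using wf.induction with
    | _ p ih =>
    obtain ⟨i, j⟩ := p
    have hkey := key (i + pq.1) (j + pq.2)
    have hmem : pq ∈ Finset.range (i + pq.1 + 1) ×ˢ Finset.range (j + pq.2 + 1) :=
      Finset.mem_product.mpr
        ⟨Finset.mem_range.2 (by omega), Finset.mem_range.2 (by omega)⟩
    rw [← Finset.sum_erase_add _ _ hmem] at hkey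
    simp only [Nat.add_sub_cancel] at hkey
    have hcb : coeff (Finsupp.single 0 pq.1 + Finsupp.single 1 pq.2) u • b (i, j) ∈ N := by
      rw [← sub_eq_of_eq_add' hkey]
      refine Submodule.sub_mem _ ⟨b (i + pq.1, j + pq.2), rfl⟩
        (Submodule.sum_mem _ fun q hq => ?_)
      obtain ⟨hqne, hqmem⟩ := Finset.mem_erase.mp hq
      obtain ⟨hq1, hq2⟩ := Finset.mem_product.mp hqmem
      rw [Finset.mem_range] at hq1 hq2
      by_cases hz : coeff (Finsupp.single 0 q.1 + Finsupp.single 1 q.2) u = 0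
      · rw [hz, zero_smul]; exact Submodule.zero_mem _
      · refine Submodule.smul_mem _ _ (ih _ ?_)
        have hnotlt := hmin q hz
        rw [Prod.lex_def] at hnotlt
        push_neg at hnotlt
        obtain ⟨ha, hb⟩ := hnotlt
        have hne : q.1 ≠ pq.1 ∨ q.2 ≠ pq.2 := by
          by_contra hcon
          push_neg at hcon
          exact hqne (Prod.ext hcon.1 hcon.2)
        by_cases h1 : q.1 = pq.1
        · have h2 : pq.2 < q.2 := by
            rcases hne with h | h
            · exact absurd h1 h
            · exact lt_of_le_of_ne (hb h1) (Ne.symm h)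
          have he : i + pq.1 - q.1 = i := by omega
          rw [he]
          exact Prod.Lex.right i (by omega)
        · exact Prod.Lex.left _ _ (by omega)
    have := Submodule.smul_mem N
      (coeff (Finsupp.single 0 pq.1 + Finsupp.single 1 pq.2) u)⁻¹ hcb
    rwa [inv_smul_smul₀ hc0] at this
  intro m
  have hm : m ∈ N := by
    have hle : Submodule.span k (Set.range b) ≤ N :=
      Submodule.span_le.mpr (by rintro x ⟨p, rfl⟩; exact main p)
    exact hle (by rw [b.span_eq]; trivial)
  obtain ⟨m', hm'⟩ := hm
  exact ⟨m', hm'⟩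
end

section
/- Let F = Σ_{k≥0} x^{(2k+1)^2} ∈ (Z/2)[[x]] and G = F(x^3). The conjugates of F over (Z/2)(G) inside a suitable extension of the Laurent series field are F(x^9) and F(rx) for the three cube roots of unity r in the field of 4 elements adjoined appropriately; in particular F(x^9) is a root of X^4 + G X + G^4 over (Z/2)(G). -/
open scoped Classical

/-- `F(x^9)`. -/
noncomputable def F9 : PowerSeries (ZMod 2) :=
  PowerSeries.mk fun n => if ∃ k, n = 9 * (2 * k + 1) ^ 2 then 1 else 0

noncomputable def ind (c : ℕ) : ℕ → ZMod 2 := fun n => if ∃ k, n = c * (2 * k + 1) ^ 2 then 1 else 0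

noncomputable def iotaP : ℕ × ℕ → ℕ × ℕ := fun p =>
  if p.1 % 4 = p.2 % 4 then
    if p.1 < 3 * p.2 then ((3 * p.2 - p.1) / 2, (p.1 + p.2) / 2)
    else ((p.1 - 3 * p.2) / 2, (p.1 + p.2) / 2)
  else
    if p.2 < p.1 then ((p.1 + 3 * p.2) / 2, (p.1 - p.2) / 2)
    else ((p.1 + 3 * p.2) / 2, (p.2 - p.1) / 2)

noncomputable def SS (n : ℕ) : Finset (ℕ × ℕ) :=
  (Finset.range (n + 1) ×ˢ Finset.range (n + 1)).filter
    (fun p => p.1 % 2 = 1 ∧ p.2 % 2 = 1 ∧ 3 * p.1 ^ 2 + 9 * p.2 ^ 2 = n)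

lemma mk_sq (f : ℕ → ZMod 2) :
    (PowerSeries.mk f) ^ 2 = PowerSeries.mk fun n => if Even n then f (n / 2) else 0 := by
  ext n
  rw [sq, PowerSeries.coeff_mul, PowerSeries.coeff_mk]
  simp only [PowerSeries.coeff_mk]
  rw [← Finset.sum_filter_add_sum_filter_not (Finset.HasAntidiagonal.antidiagonal n) (fun p => p.1 = p.2)]
  have h2 : ∑ p ∈ (Finset.HasAntidiagonal.antidiagonal n).filter (fun p => ¬ p.1 = p.2), f p.1 * f p.2 = 0 := by
    apply Finset.sum_involution (fun p _ => Prod.swap p)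
    · intro p hp
      rw [Prod.fst_swap, Prod.snd_swap, mul_comm]
      exact CharTwo.add_self_eq_zero _
    · intro p hp _
      simp only [Finset.mem_filter] at hp
      intro hc
      exact hp.2 (congrArg Prod.snd hc)
    · intro p hp
      simp only [Finset.mem_filter, Finset.HasAntidiagonal.mem_antidiagonal, Prod.fst_swap, Prod.snd_swap] at hp ⊢
      exact ⟨by omega, fun h => hp.2 h.symm⟩
    · intro p hp
      rfl
  rw [h2, add_zero]
  have h1 : (Finset.HasAntidiagonal.antidiagonal n).filter (fun p => p.1 = p.2)
      = if Even n then {(n / 2, n / 2)} else (∅ : Finset (ℕ × ℕ)) := by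
    ext p
    simp only [Finset.mem_filter, Finset.HasAntidiagonal.mem_antidiagonal, Nat.even_iff]
    split
    · simp only [Finset.mem_singleton, Prod.ext_iff]
      omega
    · simp only [Finset.notMem_empty, iff_false, not_and]
      omega
  rw [h1]
  split
  · rw [Finset.sum_singleton]
    have : ∀ x : ZMod 2, x * x = x := by decide
    exact this _
  · simp

lemma mk_ind_sq (c : ℕ) : (PowerSeries.mk (ind c)) ^ 2 = PowerSeries.mk (ind (2 * c)) := by
  rw [mk_sq]
  ext n
  rw [PowerSeries.coeff_mk, PowerSeries.coeff_mk]
  unfold ind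
  by_cases he : Even n
  · rw [if_pos he]
    obtain ⟨r, rfl⟩ := he
    refine if_congr ⟨?_, ?_⟩ rfl rfl
    · rintro ⟨k, hk⟩
      refine ⟨k, ?_⟩
      have h' : 2 * c * (2 * k + 1) ^ 2 = 2 * (c * (2 * k + 1) ^ 2) := by ring
      omega
    · rintro ⟨k, hk⟩
      refine ⟨k, ?_⟩
      have h' : 2 * c * (2 * k + 1) ^ 2 = 2 * (c * (2 * k + 1) ^ 2) := by ring
      omega
  · rw [if_neg he, eq_comm, ite_eq_right_iff]
    rintro ⟨k, hk⟩
    exfalso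
    have h' : 2 * c * (2 * k + 1) ^ 2 = 2 * (c * (2 * k + 1) ^ 2) := by ring
    exact he ⟨c * (2 * k + 1) ^ 2, by omega⟩

lemma iota_core {a b : ℕ} (ha : a % 2 = 1) (hb : b % 2 = 1) :
    (iotaP (a, b)).1 % 2 = 1 ∧ (iotaP (a, b)).2 % 2 = 1 ∧
    3 * (iotaP (a, b)).1 ^ 2 + 9 * (iotaP (a, b)).2 ^ 2 = 3 * a ^ 2 + 9 * b ^ 2 ∧
    iotaP (iotaP (a, b)) = (a, b) ∧ (iotaP (a, b) = (a, b) ↔ (a = b ∨ a = 3 * b)) := by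
  have h4 : (0:ℕ) < 4 := by norm_num
  by_cases hmod : a % 4 = b % 4
  · by_cases hlt : a < 3 * b
    · -- case A1
      have e1 : iotaP (a, b) = ((3 * b - a) / 2, (a + b) / 2) := by
        simp only [iotaP]; rw [if_pos hmod, if_pos hlt]
      rw [e1]
      set x := (3 * b - a) / 2 with hxdef
      set y := (a + b) / 2 with hydef
      have hx : 2 * x + a = 3 * b := by omega
      have hy : 2 * y = a + b := by omega
      have hq : 3 * x ^ 2 + 9 * y ^ 2 = 3 * a ^ 2 + 9 * b ^ 2 := by
        refine Nat.eq_of_mul_eq_mul_left h4 ?_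
        zify at hx hy ⊢
        linear_combination (3 * (2 * (x:ℤ) + 3 * b - a)) * hx + (9 * (2 * (y:ℤ) + a + b)) * hy
      have hmod2 : x % 4 = y % 4 := by omega
      have hlt2 : x < 3 * y := by omega
      have e2 : iotaP (x, y) = ((3 * y - x) / 2, (x + y) / 2) := by
        simp only [iotaP]; rw [if_pos hmod2, if_pos hlt2]
      have r1 : (3 * y - x) / 2 = a := by omega
      have r2 : (x + y) / 2 = b := by omega
      refine ⟨by omega, by omega, hq, by rw [e2, r1, r2], ?_, ?_⟩
      · intro hfix
        rw [Prod.mk.injEq] at hfix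
        omega
      · rintro (h | h)
        · rw [Prod.mk.injEq]; omega
        · exfalso; omega
    · -- case A2
      have hne : a ≠ 3 * b := by omega
      have e1 : iotaP (a, b) = ((a - 3 * b) / 2, (a + b) / 2) := by
        simp only [iotaP]; rw [if_pos hmod, if_neg hlt]
      rw [e1]
      set x := (a - 3 * b) / 2 with hxdef
      set y := (a + b) / 2 with hydef
      have hx : 2 * x + 3 * b = a := by omega
      have hy : 2 * y = a + b := by omega
      have hq : 3 * x ^ 2 + 9 * y ^ 2 = 3 * a ^ 2 + 9 * b ^ 2 := by
        refine Nat.eq_of_mul_eq_mul_left h4 ?_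
        zify at hx hy ⊢
        linear_combination (3 * (2 * (x:ℤ) + a - 3 * b)) * hx + (9 * (2 * (y:ℤ) + a + b)) * hy
      have hmod2 : ¬ x % 4 = y % 4 := by omega
      have hlt2 : ¬ y < x := by omega
      have e2 : iotaP (x, y) = ((x + 3 * y) / 2, (y - x) / 2) := by
        simp only [iotaP]; rw [if_neg hmod2, if_neg hlt2]
      have r1 : (x + 3 * y) / 2 = a := by omega
      have r2 : (y - x) / 2 = b := by omega
      refine ⟨by omega, by omega, hq, by rw [e2, r1, r2], ?_, ?_⟩
      · intro hfix
        rw [Prod.mk.injEq] at hfix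
        omega
      · rintro (h | h) <;> exfalso <;> omega
  · by_cases hlt : b < a
    · -- case B1
      have e1 : iotaP (a, b) = ((a + 3 * b) / 2, (a - b) / 2) := by
        simp only [iotaP]; rw [if_neg hmod, if_pos hlt]
      rw [e1]
      set x := (a + 3 * b) / 2 with hxdef
      set y := (a - b) / 2 with hydef
      have hx : 2 * x = a + 3 * b := by omega
      have hy : 2 * y + b = a := by omega
      have hq : 3 * x ^ 2 + 9 * y ^ 2 = 3 * a ^ 2 + 9 * b ^ 2 := by
        refine Nat.eq_of_mul_eq_mul_left h4 ?_
        zify at hx hy ⊢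
        linear_combination (3 * (2 * (x:ℤ) + a + 3 * b)) * hx + (9 * (2 * (y:ℤ) + a - b)) * hy
      have hmod2 : ¬ x % 4 = y % 4 := by omega
      have hlt2 : y < x := by omega
      have e2 : iotaP (x, y) = ((x + 3 * y) / 2, (x - y) / 2) := by
        simp only [iotaP]; rw [if_neg hmod2, if_pos hlt2]
      have r1 : (x + 3 * y) / 2 = a := by omega
      have r2 : (x - y) / 2 = b := by omega
      refine ⟨by omega, by omega, hq, by rw [e2, r1, r2], ?_, ?_⟩
      · intro hfix
        rw [Prod.mk.injEq] at hfix
        omega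
      · rintro (h | h)
        · exfalso; omega
        · rw [Prod.mk.injEq]; omega
    · -- case B2
      have e1 : iotaP (a, b) = ((a + 3 * b) / 2, (b - a) / 2) := by
        simp only [iotaP]; rw [if_neg hmod, if_neg hlt]
      rw [e1]
      set x := (a + 3 * b) / 2 with hxdef
      set y := (b - a) / 2 with hydef
      have hx : 2 * x = a + 3 * b := by omega
      have hy : 2 * y + a = b := by omega
      have hq : 3 * x ^ 2 + 9 * y ^ 2 = 3 * a ^ 2 + 9 * b ^ 2 := by
        refine Nat.eq_of_mul_eq_mul_left h4 ?_
        zify at hx hy ⊢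
        linear_combination (3 * (2 * (x:ℤ) + a + 3 * b)) * hx + (9 * (2 * (y:ℤ) + b - a)) * hy
      have hmod2 : x % 4 = y % 4 := by omega
      have hlt2 : ¬ x < 3 * y := by omega
      have e2 : iotaP (x, y) = ((x - 3 * y) / 2, (x + y) / 2) := by
        simp only [iotaP]; rw [if_pos hmod2, if_neg hlt2]
      have r1 : (x - 3 * y) / 2 = a := by omega
      have r2 : (x + y) / 2 = b := by omega
      refine ⟨by omega, by omega, hq, by rw [e2, r1, r2], ?_, ?_⟩
      · intro hfix
        rw [Prod.mk.injEq] at hfix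
        omega
      · rintro (h | h) <;> exfalso <;> omega

lemma mem_SS {n : ℕ} {p : ℕ × ℕ} :
    p ∈ SS n ↔ (p.1 % 2 = 1 ∧ p.2 % 2 = 1 ∧ 3 * p.1 ^ 2 + 9 * p.2 ^ 2 = n) := by
  simp only [SS, Finset.mem_filter, Finset.mem_product, Finset.mem_range]
  constructor
  · tauto
  · intro h
    have h1 : p.1 ≤ p.1 ^ 2 := Nat.le_self_pow two_ne_zero _
    have h2 : p.2 ≤ p.2 ^ 2 := Nat.le_self_pow two_ne_zero _
    exact ⟨⟨by omega, by omega⟩, h⟩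

lemma mem_SS_mk {n u v : ℕ} :
    (u, v) ∈ SS n ↔ (u % 2 = 1 ∧ v % 2 = 1 ∧ 3 * u ^ 2 + 9 * v ^ 2 = n) := mem_SS

lemma iota_SS {n : ℕ} {p : ℕ × ℕ} (hp : p ∈ SS n) :
    iotaP p ∈ SS n ∧ iotaP (iotaP p) = p ∧ (iotaP p = p ↔ p.1 = p.2 ∨ p.1 = 3 * p.2) := by
  obtain ⟨a, b⟩ := p
  rw [mem_SS] at hp
  obtain ⟨h1, h2, h3⟩ := hp
  obtain ⟨c1, c2, c3, c4, c5⟩ := iota_core h1 h2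
  exact ⟨mem_SS.mpr ⟨c1, c2, c3.trans h3⟩, c4, c5⟩

lemma sq_ne_three_sq {a b : ℕ} (hb : b % 2 = 1) : a ^ 2 ≠ 3 * b ^ 2 := by
  intro h
  have hb0 : b ≠ 0 := by omega
  have hbpos : 0 < 3 * b ^ 2 := by positivity
  have ha0 : a ≠ 0 := by
    intro h0
    rw [h0] at h
    simp only [ne_eq, OfNat.ofNat_ne_zero, not_false_eq_true, zero_pow] at h
    omega
  have happ := congrArg (fun m : ℕ => m.factorization 3) h
  simp only [Nat.factorization_pow,
    Nat.factorization_mul (by norm_num : (3:ℕ) ≠ 0) (pow_ne_zero 2 hb0),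
    Nat.Prime.factorization (by norm_num : Nat.Prime 3),
    Finsupp.coe_add, Finsupp.coe_smul, Pi.add_apply, Pi.smul_apply, smul_eq_mul,
    Finsupp.single_eq_same] at happ
  omega

lemma card_SS (n : ℕ) : (((SS n).card : ZMod 2)) = ind 12 n + ind 36 n := by
  have h0 : ∑ p ∈ (SS n).filter (fun p => ¬ iotaP p = p), (1 : ZMod 2) = 0 := by
    apply Finset.sum_involution (fun p _ => iotaP p)
    · intro p hp
      exact CharTwo.add_self_eq_zero 1
    · intro p hp _
      exact (Finset.mem_filter.mp hp).2
    · intro p hp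
      rw [Finset.mem_filter] at hp ⊢
      obtain ⟨hmem, hne⟩ := hp
      obtain ⟨m1, m2, _⟩ := iota_SS hmem
      refine ⟨m1, fun hc => hne ?_⟩
      rw [m2] at hc
      exact hc.symm
    · intro p hp
      exact (iota_SS (Finset.mem_filter.mp hp).1).2.1
  have hsplit : ((SS n).card : ZMod 2)
      = (((SS n).filter (fun p => iotaP p = p)).card : ZMod 2) := by
    rw [Finset.cast_card, ← Finset.sum_filter_add_sum_filter_not (SS n) (fun p => iotaP p = p),
      h0, add_zero, Finset.cast_card]
  rw [hsplit]
  unfold ind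
  by_cases h12 : ∃ k, n = 12 * (2 * k + 1) ^ 2
  · obtain ⟨k, hk⟩ := h12
    have h36 : ¬ ∃ j, n = 36 * (2 * j + 1) ^ 2 := by
      rintro ⟨j, hj⟩
      refine sq_ne_three_sq (a := 2 * k + 1) (b := 2 * j + 1) (by omega) ?_
      omega
    have hfix : (SS n).filter (fun p => iotaP p = p) = {(2 * k + 1, 2 * k + 1)} := by
      ext p
      obtain ⟨u, v⟩ := p
      simp only [Finset.mem_filter, Finset.mem_singleton, Prod.mk.injEq]
      constructor
      · rintro ⟨hmem, hfixp⟩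
        have hm := mem_SS.mp hmem
        rcases (iota_SS hmem).2.2.mp hfixp with h | h
        · simp only at h hm
          subst h
          have : u ^ 2 = (2 * k + 1) ^ 2 := by omega
          have := Nat.pow_left_injective (by norm_num) this
          exact ⟨this, this⟩
        · exfalso
          simp only at h hm
          subst h
          obtain ⟨j, hj⟩ : ∃ j, v = 2 * j + 1 := ⟨v / 2, by omega⟩
          refine h36 ⟨j, ?_⟩
          have h9 : (3 * v) ^ 2 = 9 * v ^ 2 := by ring
          subst hj
          omega
      · rintro ⟨rfl, rfl⟩
        have hmem : ((2 * k + 1 : ℕ), (2 * k + 1 : ℕ)) ∈ SS n :=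
          mem_SS_mk.mpr ⟨by omega, by omega, by omega⟩
        exact ⟨hmem, (iota_SS hmem).2.2.mpr (Or.inl rfl)⟩
    rw [hfix, Finset.card_singleton, if_pos ⟨k, hk⟩, if_neg h36]
    norm_num
  · by_cases h36 : ∃ k, n = 36 * (2 * k + 1) ^ 2
    · obtain ⟨k, hk⟩ := h36
      have hfix : (SS n).filter (fun p => iotaP p = p)
          = {(3 * (2 * k + 1), 2 * k + 1)} := by
        ext p
        obtain ⟨u, v⟩ := p
        simp only [Finset.mem_filter, Finset.mem_singleton, Prod.mk.injEq]
        constructor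
        · rintro ⟨hmem, hfixp⟩
          have hm := mem_SS.mp hmem
          rcases (iota_SS hmem).2.2.mp hfixp with h | h
          · exfalso
            simp only at h hm
            subst h
            obtain ⟨j, hj⟩ : ∃ j, u = 2 * j + 1 := ⟨u / 2, by omega⟩
            refine h12 ⟨j, ?_⟩
            subst hj
            omega
          · simp only at h hm
            subst h
            have h9 : (3 * v) ^ 2 = 9 * v ^ 2 := by ring
            have : v ^ 2 = (2 * k + 1) ^ 2 := by omega
            have := Nat.pow_left_injective (by norm_num) this
            subst this
            exact ⟨rfl, rfl⟩
        · rintro ⟨rfl, rfl⟩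
          have h9 : (3 * (2 * k + 1)) ^ 2 = 9 * (2 * k + 1) ^ 2 := by ring
          have hmem : ((3 * (2 * k + 1) : ℕ), (2 * k + 1 : ℕ)) ∈ SS n :=
            mem_SS_mk.mpr ⟨by omega, by omega, by omega⟩
          exact ⟨hmem, (iota_SS hmem).2.2.mpr (Or.inr rfl)⟩
      rw [hfix, Finset.card_singleton, if_neg h12, if_pos ⟨k, hk⟩]
      norm_num
    · have hfix : (SS n).filter (fun p => iotaP p = p) = ∅ := by
        ext p
        obtain ⟨u, v⟩ := p
        simp only [Finset.mem_filter, Finset.notMem_empty, iff_false, not_and]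
        intro hmem hfixp
        have hm := mem_SS.mp hmem
        rcases (iota_SS hmem).2.2.mp hfixp with h | h
        · simp only at h hm
          subst h
          obtain ⟨j, hj⟩ : ∃ j, u = 2 * j + 1 := ⟨u / 2, by omega⟩
          refine h12 ⟨j, ?_⟩
          subst hj
          omega
        · simp only at h hm
          subst h
          obtain ⟨j, hj⟩ : ∃ j, v = 2 * j + 1 := ⟨v / 2, by omega⟩
          refine h36 ⟨j, ?_⟩
          have h9 : (3 * v) ^ 2 = 9 * v ^ 2 := by ring
          subst hj
          omega
      rw [hfix, Finset.card_empty, if_neg h12, if_neg h36]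
      norm_num

lemma sum_GF9 (n : ℕ) :
    ∑ p ∈ Finset.HasAntidiagonal.antidiagonal n, ind 3 p.1 * ind 9 p.2 = ((SS n).card : ZMod 2) := by
  have hconv : ∀ p ∈ Finset.HasAntidiagonal.antidiagonal n, ind 3 p.1 * ind 9 p.2
      = if (∃ k, p.1 = 3 * (2 * k + 1) ^ 2) ∧ (∃ k, p.2 = 9 * (2 * k + 1) ^ 2)
        then (1 : ZMod 2) else 0 := by
    intro p _
    unfold ind
    rw [ite_zero_mul_ite_zero, one_mul]
  rw [Finset.sum_congr rfl hconv, Finset.sum_boole]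
  congr 1
  apply Finset.card_nbij' (fun p => (Nat.sqrt (p.1 / 3), Nat.sqrt (p.2 / 9)))
    (fun q => (3 * q.1 ^ 2, 9 * q.2 ^ 2))
  · rintro ⟨i, j⟩ hp
    simp only [Finset.mem_coe, Finset.mem_filter, Finset.HasAntidiagonal.mem_antidiagonal] at hp
    obtain ⟨hsum, ⟨k, hk⟩, ⟨l, hl⟩⟩ := hp
    subst hk hl
    have e1 : 3 * (2 * k + 1) ^ 2 / 3 = (2 * k + 1) ^ 2 := by omega
    have e2 : 9 * (2 * l + 1) ^ 2 / 9 = (2 * l + 1) ^ 2 := by omega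
    simp only [e1, e2, Nat.sqrt_eq']
    exact mem_SS_mk.mpr ⟨by omega, by omega, by omega⟩
  · rintro ⟨u, v⟩ hq
    rw [Finset.mem_coe, mem_SS_mk] at hq
    simp only [Finset.mem_coe, Finset.mem_filter, Finset.HasAntidiagonal.mem_antidiagonal]
    refine ⟨by omega, ⟨u / 2, ?_⟩, ⟨v / 2, ?_⟩⟩
    · have : 2 * (u / 2) + 1 = u := by omega
      rw [this]
    · have : 2 * (v / 2) + 1 = v := by omega
      rw [this]
  · rintro ⟨i, j⟩ hp
    simp only [Finset.mem_coe, Finset.mem_filter, Finset.HasAntidiagonal.mem_antidiagonal] at hp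
    obtain ⟨hsum, ⟨k, hk⟩, ⟨l, hl⟩⟩ := hp
    subst hk hl
    have e1 : 3 * (2 * k + 1) ^ 2 / 3 = (2 * k + 1) ^ 2 := by omega
    have e2 : 9 * (2 * l + 1) ^ 2 / 9 = (2 * l + 1) ^ 2 := by omega
    simp only [e1, e2, Nat.sqrt_eq']
  · rintro ⟨u, v⟩ hq
    simp only
    rw [Nat.mul_div_cancel_left _ (by norm_num : (0:ℕ) < 3),
      Nat.mul_div_cancel_left _ (by norm_num : (0:ℕ) < 9), Nat.sqrt_eq', Nat.sqrt_eq']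

/-- `F(x^9)` is a conjugate of `F` over `(Z/2)(G)`: it is a root of
`X^4 + GX + G^4 = (X+G)^4 - XG` (char 2). -/
theorem stmt_9 : F9 ^ 4 + G * F9 + G ^ 4 = 0 := by
  have hF9 : F9 = PowerSeries.mk (ind 9) := rfl
  have hG : G = PowerSeries.mk (ind 3) := rfl
  have h36 : F9 ^ 4 = PowerSeries.mk (ind 36) := by
    rw [hF9, show (PowerSeries.mk (ind 9)) ^ 4 = ((PowerSeries.mk (ind 9)) ^ 2) ^ 2 by ring,
      mk_ind_sq, show (2 * 9 : ℕ) = 18 by norm_num, mk_ind_sq,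
      show (2 * 18 : ℕ) = 36 by norm_num]
  have h12 : G ^ 4 = PowerSeries.mk (ind 12) := by
    rw [hG, show (PowerSeries.mk (ind 3)) ^ 4 = ((PowerSeries.mk (ind 3)) ^ 2) ^ 2 by ring,
      mk_ind_sq, show (2 * 3 : ℕ) = 6 by norm_num, mk_ind_sq,
      show (2 * 6 : ℕ) = 12 by norm_num]
  ext n
  rw [map_add, map_add, map_zero, h36, h12, hG, hF9, PowerSeries.coeff_mul]
  simp only [PowerSeries.coeff_mk]
  rw [sum_GF9, card_SS]
  have : ∀ x y : ZMod 2, x + (y + x) + y = 0 := by decide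
  exact this _ _
end

section
/- Define U_3 : (Z/2)[[x]] → (Z/2)[[x]] by U_3(Σ c_n x^n) = Σ c_{3n} x^n, and for an odd prime p ≠ 3 define T_p(Σ c_n x^n) = Σ c_{pn} x^n + Σ c_n x^{pn}. Let V' ⊂ (Z/2)[[x]] be the span of G^k for k odd, where G = F(x^3) and F = Σ x^{(2k+1)^2}, and let V be the span of F^k for k odd. Then U_3 maps V' bijectively onto V, and U_3 ∘ T_p = T_p ∘ U_3 on V' for every odd prime p ≠ 3. -/
open scoped Classical

/-- The formal Hecke operator `T_p`. -/
noncomputable def T (p : ℕ) (f : PowerSeries (ZMod 2)) : PowerSeries (ZMod 2) :=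
  PowerSeries.mk fun n =>
    PowerSeries.coeff (p * n) f +
      if p ∣ n then PowerSeries.coeff (n / p) f else 0

/-- `U_3 : Σ c_n x^n ↦ Σ c_{3n} x^n`. -/
noncomputable def U3 (f : PowerSeries (ZMod 2)) : PowerSeries (ZMod 2) :=
  PowerSeries.mk fun n => PowerSeries.coeff (3 * n) f

/-- `V` is the span of the `F^k`, `k` odd. -/
noncomputable def V : Submodule (ZMod 2) (PowerSeries (ZMod 2)) :=
  Submodule.span (ZMod 2) {f | ∃ k, Odd k ∧ f = F ^ k}

/-- `V'` is the span of the `G^k`, `k` odd. -/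
noncomputable def V' : Submodule (ZMod 2) (PowerSeries (ZMod 2)) :=
  Submodule.span (ZMod 2) {f | ∃ k, Odd k ∧ f = G ^ k}

/-! ### Auxiliary definitions and lemmas -/

/-- The substitution `f(x) ↦ f(x^3)`. -/
noncomputable def sig (f : PowerSeries (ZMod 2)) : PowerSeries (ZMod 2) :=
  PowerSeries.mk fun n => if 3 ∣ n then PowerSeries.coeff (n / 3) f else 0

lemma coeff_sig (f : PowerSeries (ZMod 2)) (n : ℕ) :
    PowerSeries.coeff n (sig f) =
      if 3 ∣ n then PowerSeries.coeff (n / 3) f else 0 :=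
  PowerSeries.coeff_mk _ _

lemma coeff_U3 (f : PowerSeries (ZMod 2)) (n : ℕ) :
    PowerSeries.coeff n (U3 f) = PowerSeries.coeff (3 * n) f :=
  PowerSeries.coeff_mk _ _

lemma U3_sig (f : PowerSeries (ZMod 2)) : U3 (sig f) = f := by
  ext n
  rw [coeff_U3, coeff_sig, if_pos ⟨n, rfl⟩, Nat.mul_div_cancel_left n (by norm_num)]

/-- `U3` as a linear map. -/
noncomputable def U3L : PowerSeries (ZMod 2) →ₗ[ZMod 2] PowerSeries (ZMod 2) where
  toFun := U3
  map_add' f g := by ext n; simp [coeff_U3, map_add]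
  map_smul' c f := by ext n; simp [coeff_U3]

/-- `sig` as a linear map. -/
noncomputable def sigL : PowerSeries (ZMod 2) →ₗ[ZMod 2] PowerSeries (ZMod 2) where
  toFun := sig
  map_add' f g := by
    ext n; simp only [coeff_sig, map_add]
    split <;> simp
  map_smul' c f := by
    ext n; simp only [coeff_sig, RingHom.id_apply, PowerSeries.coeff_smul, smul_eq_mul]
    split <;> simp

lemma sig_mul (f g : PowerSeries (ZMod 2)) : sig (f * g) = sig f * sig g := by
  ext n
  rw [PowerSeries.coeff_mul, coeff_sig]
  by_cases h3 : 3 ∣ n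
  · obtain ⟨m, rfl⟩ := h3
    rw [if_pos ⟨m, rfl⟩, Nat.mul_div_cancel_left m (by norm_num), PowerSeries.coeff_mul]
    have hemb : Function.Injective (fun p : ℕ × ℕ => (3 * p.1, 3 * p.2)) := by
      intro p q h
      simp only [Prod.mk.injEq, Prod.ext_iff] at h ⊢
      omega
    have key : ∑ p ∈ Finset.HasAntidiagonal.antidiagonal (3 * m),
        PowerSeries.coeff p.1 (sig f) * PowerSeries.coeff p.2 (sig g) =
        ∑ p ∈ (Finset.HasAntidiagonal.antidiagonal m).map ⟨fun p => (3 * p.1, 3 * p.2), hemb⟩,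
        PowerSeries.coeff p.1 (sig f) * PowerSeries.coeff p.2 (sig g) := by
      refine (Finset.sum_subset ?_ ?_).symm
      · intro p hp
        rw [Finset.mem_map] at hp
        obtain ⟨q, hq, rfl⟩ := hp
        rw [Finset.HasAntidiagonal.mem_antidiagonal] at hq ⊢
        simp only [Function.Embedding.coeFn_mk]
        omega
      · intro p hp hnot
        rw [Finset.HasAntidiagonal.mem_antidiagonal] at hp
        by_cases h1 : 3 ∣ p.1
        · by_cases h2 : 3 ∣ p.2
          · exfalso
            apply hnot
            rw [Finset.mem_map]
            refine ⟨(p.1 / 3, p.2 / 3), ?_, ?_⟩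
            · rw [Finset.HasAntidiagonal.mem_antidiagonal]
              obtain ⟨a, ha⟩ := h1
              obtain ⟨b, hb⟩ := h2
              simp only [ha, hb]
              rw [Nat.mul_div_cancel_left a (by norm_num),
                Nat.mul_div_cancel_left b (by norm_num)]
              omega
            · simp only [Function.Embedding.coeFn_mk]
              rw [Nat.mul_div_cancel' h1, Nat.mul_div_cancel' h2]
          · rw [coeff_sig g, if_neg h2, mul_zero]
        · rw [coeff_sig f, if_neg h1, zero_mul]
    rw [key, Finset.sum_map]
    refine Finset.sum_congr rfl fun p hp => ?_
    simp only [Function.Embedding.coeFn_mk, coeff_sig]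
    rw [if_pos ⟨p.1, rfl⟩, if_pos ⟨p.2, rfl⟩,
      Nat.mul_div_cancel_left p.1 (by norm_num), Nat.mul_div_cancel_left p.2 (by norm_num)]
  · rw [if_neg h3]
    refine (Finset.sum_eq_zero fun p hp => ?_).symm
    rw [Finset.HasAntidiagonal.mem_antidiagonal] at hp
    rw [coeff_sig, coeff_sig]
    by_cases h1 : 3 ∣ p.1
    · rw [if_neg (fun h2 => h3 (hp ▸ Nat.dvd_add h1 h2)), mul_zero]
    · rw [if_neg h1, zero_mul]

lemma sig_one : sig 1 = 1 := by
  ext n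
  rw [coeff_sig, PowerSeries.coeff_one]
  by_cases h3 : 3 ∣ n
  · obtain ⟨m, rfl⟩ := h3
    rw [if_pos ⟨m, rfl⟩, Nat.mul_div_cancel_left m (by norm_num), PowerSeries.coeff_one]
    by_cases hm : m = 0 <;> simp [hm]
  · rw [if_neg h3, eq_comm, PowerSeries.coeff_one, if_neg]
    rintro rfl
    exact h3 (dvd_zero 3)

lemma sig_pow (f : PowerSeries (ZMod 2)) (k : ℕ) : sig (f ^ k) = sig f ^ k := by
  induction k with
  | zero => simpa using sig_one
  | succ k ih => rw [pow_succ, pow_succ, sig_mul, ih]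

lemma sig_F : sig F = G := by
  ext n
  rw [coeff_sig]
  by_cases h3 : 3 ∣ n
  · obtain ⟨m, rfl⟩ := h3
    rw [if_pos ⟨m, rfl⟩, Nat.mul_div_cancel_left m (by norm_num)]
    simp only [F, G, PowerSeries.coeff_mk]
    refine if_congr ?_ rfl rfl
    constructor
    · rintro ⟨k, rfl⟩; exact ⟨k, rfl⟩
    · rintro ⟨k, hk⟩; exact ⟨k, by omega⟩
  · rw [if_neg h3]
    simp only [G, PowerSeries.coeff_mk]
    rw [if_neg]
    rintro ⟨k, rfl⟩
    exact h3 ⟨(2 * k + 1) ^ 2, rfl⟩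

theorem stmt_11 :
    Set.BijOn U3 (V' : Set (PowerSeries (ZMod 2))) (V : Set (PowerSeries (ZMod 2))) ∧
    ∀ p : ℕ, p.Prime → Odd p → p ≠ 3 →
      ∀ f ∈ V', U3 (T p f) = T p (U3 f) := by
  have hU3Gk : ∀ k : ℕ, U3 (G ^ k) = F ^ k := by
    intro k
    rw [← sig_F, ← sig_pow, U3_sig]
  have hsigFk : ∀ k : ℕ, sig (F ^ k) = G ^ k := by
    intro k; rw [sig_pow, sig_F]
  -- every element of V' is fixed by sig ∘ U3
  have hfix : ∀ f ∈ V', sig (U3 f) = f := by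
    intro f hf
    have : V' ≤ LinearMap.eqLocus (sigL ∘ₗ U3L) LinearMap.id := by
      rw [V', Submodule.span_le]
      rintro _ ⟨k, -, rfl⟩
      show sig (U3 (G ^ k)) = G ^ k
      rw [hU3Gk, hsigFk]
    exact this hf
  constructor
  · refine ⟨?_, ?_, ?_⟩
    · -- MapsTo
      intro f hf
      have : V' ≤ V.comap U3L := by
        rw [V', Submodule.span_le]
        rintro _ ⟨k, hk, rfl⟩
        exact Submodule.mem_comap.2 (by
          show U3 (G ^ k) ∈ V
          rw [hU3Gk]
          exact Submodule.subset_span ⟨k, hk, rfl⟩)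
      exact this hf
    · -- InjOn
      intro f hf g hg h
      rw [← hfix f hf, ← hfix g hg, h]
    · -- SurjOn
      intro f hf
      have : V ≤ V'.comap sigL := by
        rw [V, Submodule.span_le]
        rintro _ ⟨k, hk, rfl⟩
        exact Submodule.mem_comap.2 (by
          show sig (F ^ k) ∈ V'
          rw [hsigFk]
          exact Submodule.subset_span ⟨k, hk, rfl⟩)
      exact ⟨sig f, this hf, U3_sig f⟩
  · intro p hp hodd hp3 f _
    have hpd3 : ¬ p ∣ 3 := by
      intro h
      exact hp3 ((Nat.prime_dvd_prime_iff_eq hp (by norm_num)).1 h)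
    ext n
    simp only [U3, T, PowerSeries.coeff_mk]
    have hdvd : p ∣ 3 * n ↔ p ∣ n := by
      constructor
      · intro h
        rcases (Nat.Prime.dvd_mul hp).1 h with h | h
        · exact absurd h hpd3
        · exact h
      · exact fun h => Dvd.dvd.mul_left h 3
    rw [show p * (3 * n) = 3 * (p * n) by ring]
    congr 1
    by_cases hpn : p ∣ n
    · rw [if_pos (hdvd.2 hpn), if_pos hpn, Nat.mul_div_assoc 3 hpn]
    · rw [if_neg (fun h => hpn (hdvd.1 h)), if_neg hpn]
end

section
/- Let F = Σ_{k≥0} x^{(2k+1)^2} ∈ (Z/2)[[x]] and G = F(x^3). Then G = D^3, where D = pr(F) and pr : (Z/2)[[x]] → (Z/2)[[x]] is the projection Σ c_n x^n ↦ Σ_{(n,3)=1} c_n x^n. -/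
open scoped Classical

/-- `pr` deletes all terms whose exponent is divisible by 3. -/
noncomputable def pr (f : PowerSeries (ZMod 2)) : PowerSeries (ZMod 2) :=
  PowerSeries.mk fun n => if 3 ∣ n then 0 else PowerSeries.coeff n f

/-- `D = pr(F)`. -/
noncomputable def D : PowerSeries (ZMod 2) := pr F

/-! ### Combinatorial core -/

/-- Adjacency relation on pairs for the parity (handshake) argument. -/
def AdjP (p q : ℕ × ℕ) : Prop :=
  p ≠ q ∧
    ((3 * q.1 = p.1 + 2 * p.2 ∧ (3 * q.2 + p.2 = 4 * p.1 ∨ 3 * q.2 + 4 * p.1 = p.2)) ∨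
     ((3 * q.1 + p.1 = 2 * p.2 ∨ 3 * q.1 + 2 * p.2 = p.1) ∧ 3 * q.2 = 4 * p.1 + p.2))

def Ypairs (n : ℕ) : Finset (ℕ × ℕ) :=
  (Finset.range (n+1) ×ˢ Finset.range (n+1)).filter
    (fun p => p.1 % 2 = 1 ∧ p.2 % 2 = 1 ∧ 2 * p.1^2 + p.2^2 = n)

lemma mem_Ypairs {n : ℕ} {p : ℕ × ℕ} :
    p ∈ Ypairs n ↔ p.1 % 2 = 1 ∧ p.2 % 2 = 1 ∧ 2 * p.1^2 + p.2^2 = n := by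
  have h1 : p.1 ≤ p.1^2 := Nat.le_self_pow two_ne_zero _
  have h2 : p.2 ≤ p.2^2 := Nat.le_self_pow two_ne_zero _
  simp only [Ypairs, Finset.mem_filter, Finset.mem_product, Finset.mem_range]
  constructor
  · rintro ⟨_, h⟩; exact h
  · rintro ⟨ha, hb, hc⟩; exact ⟨⟨by omega, by omega⟩, ha, hb, hc⟩

lemma adjP_symm {p q : ℕ × ℕ} (h : AdjP p q) : AdjP q p := by
  obtain ⟨u, v⟩ := p
  obtain ⟨s, t⟩ := q
  simp only [AdjP, ne_eq, Prod.mk.injEq, not_and] at h ⊢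
  omega

lemma adjP_closed {n : ℕ} {p q : ℕ × ℕ} (hp : p ∈ Ypairs n) (h : AdjP p q) :
    q ∈ Ypairs n := by
  obtain ⟨u, v⟩ := p
  obtain ⟨s, t⟩ := q
  rw [mem_Ypairs] at hp ⊢
  obtain ⟨hu2, hv2, hn⟩ := hp
  simp only at hu2 hv2 hn ⊢
  have key : 2 * s^2 + t^2 = 2 * u^2 + v^2 := by
    have cast9 : (9:ℤ) * (2*(s:ℤ)^2+(t:ℤ)^2) = 9 * (2*(u:ℤ)^2+(v:ℤ)^2) →
        2 * s^2 + t^2 = 2 * u^2 + v^2 := by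
      intro h9
      have : (2*(s:ℤ)^2+(t:ℤ)^2) = (2*(u:ℤ)^2+(v:ℤ)^2) := by linarith
      exact_mod_cast this
    obtain ⟨-, (⟨h1, (h2 | h2)⟩ | ⟨(h1 | h1), h2⟩)⟩ := h
    · have h1' : (3:ℤ) * s = u + 2 * v := by exact_mod_cast h1
      have h2' : (3:ℤ) * t + v = 4 * u := by exact_mod_cast h2
      exact cast9 (by linear_combination (2*(3*(s:ℤ)+u+2*v)) * h1' + (3*(t:ℤ)+4*u-v) * h2')
    · have h1' : (3:ℤ) * s = u + 2 * v := by exact_mod_cast h1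
      have h2' : (3:ℤ) * t + 4 * u = v := by exact_mod_cast h2
      exact cast9 (by linear_combination (2*(3*(s:ℤ)+u+2*v)) * h1' + (3*(t:ℤ)-4*u+v) * h2')
    · have h1' : (3:ℤ) * s + u = 2 * v := by exact_mod_cast h1
      have h2' : (3:ℤ) * t = 4 * u + v := by exact_mod_cast h2
      exact cast9 (by linear_combination (2*(3*(s:ℤ)-u+2*v)) * h1' + (3*(t:ℤ)+4*u+v) * h2')
    · have h1' : (3:ℤ) * s + 2 * v = u := by exact_mod_cast h1
      have h2' : (3:ℤ) * t = 4 * u + v := by exact_mod_cast h2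
      exact cast9 (by linear_combination (2*(3*(s:ℤ)+u-2*v)) * h1' + (3*(t:ℤ)+4*u+v) * h2')
  obtain ⟨-, (⟨h1, (h2 | h2)⟩ | ⟨(h1 | h1), h2⟩)⟩ := h <;>
    exact ⟨by omega, by omega, by omega⟩

lemma adjP_unique_cop {u v : ℕ} (hu2 : u % 2 = 1) (hv2 : v % 2 = 1)
    (h3u : u % 3 ≠ 0) (h3v : v % 3 ≠ 0) {q q' : ℕ × ℕ}
    (h : AdjP (u,v) q) (h' : AdjP (u,v) q') : q = q' := by
  obtain ⟨s, t⟩ := q; obtain ⟨s', t'⟩ := q'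
  simp only [AdjP, ne_eq, Prod.mk.injEq, not_and] at h h' ⊢
  omega

/-- The degree count mod 2. -/
lemma filter_adjP_card {n : ℕ} {p : ℕ × ℕ} (hp : p ∈ Ypairs n) :
    (((Ypairs n).filter (fun q => AdjP p q)).card : ZMod 2)
      = if (p.1 % 3 ≠ 0 ∧ p.2 % 3 ≠ 0 ∧ p.1 ≠ p.2) ∨
          (p.1 % 3 = 0 ∧ p.2 % 3 = 0 ∧ p.1 = p.2) then 1 else 0 := by
  obtain ⟨u, v⟩ := p
  obtain ⟨hu2, hv2, hn⟩ := mem_Ypairs.mp hp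
  simp only at hu2 hv2 hn
  by_cases h3u : u % 3 = 0 <;> by_cases h3v : v % 3 = 0
  · -- both divisible by 3
    by_cases hd : u = v
    · -- diagonal: one neighbor (branch 2)
      have hadj : AdjP (u,v) ((2*v-u)/3, (4*u+v)/3) := by
        simp only [AdjP, ne_eq, Prod.mk.injEq, not_and]; omega
      have hfil : (Ypairs n).filter (fun q => AdjP (u,v) q) = {((2*v-u)/3, (4*u+v)/3)} := by
        ext ⟨s, t⟩
        simp only [Finset.mem_filter, Finset.mem_singleton, Prod.mk.injEq]
        constructor
        · rintro ⟨-, hA⟩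
          simp only [AdjP, ne_eq, Prod.mk.injEq, not_and] at hA
          omega
        · rintro ⟨hs, ht⟩
          subst hs; subst ht
          exact ⟨adjP_closed hp hadj, hadj⟩
      rw [hfil, Finset.card_singleton, if_pos (Or.inr ⟨h3u, h3v, hd⟩), Nat.cast_one]
    · -- off-diagonal: two neighbors
      have hq1 : AdjP (u,v) ((u+2*v)/3, if v ≤ 4*u then (4*u-v)/3 else (v-4*u)/3) := by
        simp only [AdjP, ne_eq, Prod.mk.injEq, not_and]
        split_ifs with h <;> omega
      have hq2 : AdjP (u,v) ((if u ≤ 2*v then (2*v-u)/3 else (u-2*v)/3), (4*u+v)/3) := by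
        simp only [AdjP, ne_eq, Prod.mk.injEq, not_and]
        split_ifs with h <;> omega
      have hne : ((u+2*v)/3, if v ≤ 4*u then (4*u-v)/3 else (v-4*u)/3)
          ≠ ((if u ≤ 2*v then (2*v-u)/3 else (u-2*v)/3), (4*u+v)/3) := by
        simp only [ne_eq, Prod.mk.injEq, not_and]
        split_ifs with h h' <;> omega
      have hfil : (Ypairs n).filter (fun q => AdjP (u,v) q)
          = {((u+2*v)/3, if v ≤ 4*u then (4*u-v)/3 else (v-4*u)/3),
             ((if u ≤ 2*v then (2*v-u)/3 else (u-2*v)/3), (4*u+v)/3)} := by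
        ext ⟨s, t⟩
        simp only [Finset.mem_filter, Finset.mem_insert, Finset.mem_singleton, Prod.mk.injEq]
        constructor
        · rintro ⟨-, hA⟩
          simp only [AdjP, ne_eq, Prod.mk.injEq, not_and] at hA
          split_ifs with h h' <;> omega
        · rintro (⟨hs, ht⟩ | ⟨hs, ht⟩) <;> (subst hs; subst ht)
          · exact ⟨adjP_closed hp hq1, hq1⟩
          · exact ⟨adjP_closed hp hq2, hq2⟩
      rw [hfil, Finset.card_pair hne,
        if_neg (fun h => by rcases h with ⟨hc,-⟩|⟨-,-,he⟩; exacts [hc h3u, hd he])]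
      decide
  · -- mixed: no neighbors
    have hfil : (Ypairs n).filter (fun q => AdjP (u,v) q) = ∅ := by
      rw [Finset.filter_eq_empty_iff]
      rintro ⟨s, t⟩ -
      simp only [AdjP, ne_eq, Prod.mk.injEq, not_and]
      omega
    rw [hfil, Finset.card_empty,
      if_neg (fun h => by rcases h with ⟨hc,-⟩|⟨-,hc2,-⟩; exacts [hc h3u, h3v hc2]), Nat.cast_zero]
  · -- mixed: no neighbors
    have hfil : (Ypairs n).filter (fun q => AdjP (u,v) q) = ∅ := by
      rw [Finset.filter_eq_empty_iff]
      rintro ⟨s, t⟩ -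
      simp only [AdjP, ne_eq, Prod.mk.injEq, not_and]
      omega
    rw [hfil, Finset.card_empty,
      if_neg (fun h => by rcases h with ⟨-,hc,-⟩|⟨hc2,-⟩; exacts [hc h3v, h3u hc2]), Nat.cast_zero]
  · -- coprime
    by_cases hd : u = v
    · -- diagonal: no neighbors
      have hfil : (Ypairs n).filter (fun q => AdjP (u,v) q) = ∅ := by
        rw [Finset.filter_eq_empty_iff]
        rintro ⟨s, t⟩ -
        simp only [AdjP, ne_eq, Prod.mk.injEq, not_and]
        omega
      rw [hfil, Finset.card_empty,
        if_neg (fun h => by rcases h with ⟨-,-,hne⟩|⟨hc,-⟩; exacts [hne hd, h3u hc]), Nat.cast_zero]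
    · -- off-diagonal: exactly one neighbor
      have h3u' : u % 3 = 1 ∨ u % 3 = 2 := by omega
      have h3v' : v % 3 = 1 ∨ v % 3 = 2 := by omega
      have hex : ∃ q₀, AdjP (u,v) q₀ := by
        by_cases hb : (u + 2*v) % 3 = 0
        · refine ⟨((u+2*v)/3, if v ≤ 4*u then (4*u-v)/3 else (v-4*u)/3), ?_⟩
          simp only [AdjP, ne_eq, Prod.mk.injEq, not_and]
          rcases h3u' with h1 | h1 <;> rcases h3v' with h2 | h2 <;> split_ifs with h <;> omega
        · refine ⟨((if u ≤ 2*v then (2*v-u)/3 else (u-2*v)/3), (4*u+v)/3), ?_⟩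
          simp only [AdjP, ne_eq, Prod.mk.injEq, not_and]
          rcases h3u' with h1 | h1 <;> rcases h3v' with h2 | h2 <;> split_ifs with h <;> omega
      obtain ⟨q₀, hq₀⟩ := hex
      have hfil : (Ypairs n).filter (fun q => AdjP (u,v) q) = {q₀} := by
        ext q
        simp only [Finset.mem_filter, Finset.mem_singleton]
        constructor
        · rintro ⟨-, hA⟩
          exact adjP_unique_cop hu2 hv2 h3u h3v hA hq₀
        · rintro rfl
          exact ⟨adjP_closed hp hq₀, hq₀⟩
      rw [hfil, Finset.card_singleton, if_pos (Or.inl ⟨h3u, h3v, hd⟩), Nat.cast_one]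

lemma sum_adjP_zero (n : ℕ) :
    ∑ p ∈ Ypairs n, ∑ q ∈ Ypairs n, (if AdjP p q then (1 : ZMod 2) else 0) = 0 := by
  rw [← Finset.sum_product' (Ypairs n) (Ypairs n)
      (fun p q => if AdjP p q then (1 : ZMod 2) else 0)]
  refine Finset.sum_involution (fun z _ => (z.2, z.1)) ?_ ?_ ?_ ?_
  · intro z hz
    by_cases hA : AdjP z.1 z.2
    · rw [if_pos hA, if_pos (adjP_symm hA)]; decide
    · rw [if_neg hA, if_neg (fun h => hA (adjP_symm h)), add_zero]
  · intro z hz hne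
    have hA : AdjP z.1 z.2 := by
      by_contra h; exact hne (if_neg h)
    intro hswap
    have h1 : z.2 = z.1 := congrArg Prod.fst hswap
    exact hA.1 (by rw [Prod.ext_iff]; exact ⟨congrArg Prod.snd hswap |>.symm ▸ rfl, by rw [h1]⟩)
  · intro z hz
    simp only [Finset.mem_product] at hz ⊢
    exact ⟨hz.2, hz.1⟩
  · intro z hz; rfl

lemma parity (n : ℕ) :
    (((Ypairs n).filter (fun p => p.1 % 3 ≠ 0 ∧ p.2 % 3 ≠ 0)).card : ZMod 2)
      = (((Ypairs n).filter (fun p => p.1 = p.2)).card : ZMod 2) := by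
  have h0 := sum_adjP_zero n
  have h1 : ∀ p ∈ Ypairs n, ∑ q ∈ Ypairs n, (if AdjP p q then (1 : ZMod 2) else 0)
      = if (p.1 % 3 ≠ 0 ∧ p.2 % 3 ≠ 0 ∧ p.1 ≠ p.2) ∨
          (p.1 % 3 = 0 ∧ p.2 % 3 = 0 ∧ p.1 = p.2) then 1 else 0 := by
    intro p hp
    rw [Finset.sum_boole]
    exact filter_adjP_card hp
  rw [Finset.sum_congr rfl h1] at h0
  have h2 : ∀ p ∈ Ypairs n,
      (if p.1 % 3 ≠ 0 ∧ p.2 % 3 ≠ 0 then (1 : ZMod 2) else 0)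
        = (if (p.1 % 3 ≠ 0 ∧ p.2 % 3 ≠ 0 ∧ p.1 ≠ p.2) ∨
            (p.1 % 3 = 0 ∧ p.2 % 3 = 0 ∧ p.1 = p.2) then 1 else 0)
          + (if p.1 = p.2 then (1 : ZMod 2) else 0) := by
    intro p _
    split_ifs with hA hB hC hB hC hC <;> first | decide | (exfalso; omega)
  calc (((Ypairs n).filter (fun p => p.1 % 3 ≠ 0 ∧ p.2 % 3 ≠ 0)).card : ZMod 2)
      = ∑ p ∈ Ypairs n, (if p.1 % 3 ≠ 0 ∧ p.2 % 3 ≠ 0 then (1 : ZMod 2) else 0) := by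
        rw [Finset.sum_boole]
    _ = ∑ p ∈ Ypairs n, ((if (p.1 % 3 ≠ 0 ∧ p.2 % 3 ≠ 0 ∧ p.1 ≠ p.2) ∨
            (p.1 % 3 = 0 ∧ p.2 % 3 = 0 ∧ p.1 = p.2) then (1 : ZMod 2) else 0)
          + (if p.1 = p.2 then (1 : ZMod 2) else 0)) := Finset.sum_congr rfl h2
    _ = (((Ypairs n).filter (fun p => p.1 = p.2)).card : ZMod 2) := by
        rw [Finset.sum_add_distrib, h0, zero_add, Finset.sum_boole]

lemma diag_card (n : ℕ) :
    ((Ypairs n).filter (fun p => p.1 = p.2)).card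
      = if ∃ k, n = 3 * (2 * k + 1) ^ 2 then 1 else 0 := by
  split_ifs with h
  · obtain ⟨k, hk⟩ := h
    rw [Finset.card_eq_one]
    refine ⟨(2*k+1, 2*k+1), ?_⟩
    ext ⟨a, b⟩
    simp only [Finset.mem_filter, mem_Ypairs, Finset.mem_singleton, Prod.mk.injEq]
    constructor
    · rintro ⟨⟨ha2, hb2, hab⟩, hd⟩
      subst hd
      have h2 : a^2 = (2*k+1)^2 := by omega
      have := Nat.pow_left_injective (n := 2) (by norm_num) h2
      exact ⟨this, this⟩
    · rintro ⟨ha, hb⟩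
      subst ha; subst hb
      refine ⟨⟨by omega, by omega, by omega⟩, rfl⟩
  · rw [Finset.card_eq_zero, Finset.filter_eq_empty_iff]
    rintro ⟨a, b⟩ hmem hd
    obtain ⟨ha2, hb2, hab⟩ := mem_Ypairs.mp hmem
    simp only at ha2 hb2 hab hd
    subst hd
    refine h ⟨a / 2, ?_⟩
    have : 2 * (a/2) + 1 = a := by omega
    rw [this]
    omega

/-! ### Power series part -/

lemma coeff_D (m : ℕ) :
    PowerSeries.coeff m D
      = if ∃ j, j % 2 = 1 ∧ ¬ 3 ∣ j ∧ m = j^2 then 1 else 0 := by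
  rw [D, pr, PowerSeries.coeff_mk]
  by_cases h3 : (3:ℕ) ∣ m
  · rw [if_pos h3, eq_comm, if_neg]
    rintro ⟨j, hj2, hj3, rfl⟩
    exact hj3 (Nat.Prime.dvd_of_dvd_pow Nat.prime_three h3)
  · rw [if_neg h3, F, PowerSeries.coeff_mk]
    refine if_congr ⟨?_, ?_⟩ rfl rfl
    · rintro ⟨k, rfl⟩
      exact ⟨2*k+1, by omega, fun hd => h3 (dvd_pow hd two_ne_zero), rfl⟩
    · rintro ⟨j, hj2, hj3, rfl⟩
      exact ⟨j / 2, by congr 1; omega⟩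

lemma coeff_DD (m : ℕ) :
    PowerSeries.coeff m (D * D)
      = if ∃ j, j % 2 = 1 ∧ ¬ 3 ∣ j ∧ m = j^2 + j^2 then 1 else 0 := by
  rw [PowerSeries.coeff_mul]
  have hsummand : ∀ p ∈ Finset.HasAntidiagonal.antidiagonal m,
      PowerSeries.coeff p.1 D * PowerSeries.coeff p.2 D
        = if (∃ j, j % 2 = 1 ∧ ¬ 3 ∣ j ∧ p.1 = j^2) ∧
            (∃ j, j % 2 = 1 ∧ ¬ 3 ∣ j ∧ p.2 = j^2) then 1 else 0 := by
    intro p _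
    rw [coeff_D, coeff_D]
    by_cases hA : (∃ j, j % 2 = 1 ∧ ¬ 3 ∣ j ∧ p.1 = j^2) <;>
      by_cases hB : (∃ j, j % 2 = 1 ∧ ¬ 3 ∣ j ∧ p.2 = j^2) <;>
      simp [hA, hB]
  rw [Finset.sum_congr rfl hsummand,
    ← Finset.sum_filter_add_sum_filter_not (Finset.HasAntidiagonal.antidiagonal m) (fun p => p.1 = p.2)]
  have hoff : ∑ p ∈ (Finset.HasAntidiagonal.antidiagonal m).filter (fun p => ¬ p.1 = p.2),
      (if (∃ j, j % 2 = 1 ∧ ¬ 3 ∣ j ∧ p.1 = j^2) ∧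
        (∃ j, j % 2 = 1 ∧ ¬ 3 ∣ j ∧ p.2 = j^2) then (1 : ZMod 2) else 0) = 0 := by
    refine Finset.sum_involution (fun z _ => (z.2, z.1)) ?_ ?_ ?_ ?_
    · intro z hz
      by_cases hA : (∃ j, j % 2 = 1 ∧ ¬ 3 ∣ j ∧ z.1 = j^2) ∧
          (∃ j, j % 2 = 1 ∧ ¬ 3 ∣ j ∧ z.2 = j^2)
      · rw [if_pos hA, if_pos ⟨hA.2, hA.1⟩]; decide
      · rw [if_neg hA, if_neg (fun h => hA ⟨h.2, h.1⟩), add_zero]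
    · intro z hz hne
      simp only [Finset.mem_filter] at hz
      intro hswap
      exact hz.2 (congrArg Prod.snd hswap)
    · intro z hz
      simp only [Finset.mem_filter, Finset.HasAntidiagonal.mem_antidiagonal] at hz ⊢
      exact ⟨by omega, fun h => hz.2 h.symm⟩
    · intro z hz; rfl
  rw [hoff, add_zero]
  have hfil : (Finset.HasAntidiagonal.antidiagonal m).filter (fun p => p.1 = p.2)
      = if m % 2 = 0 then {(m/2, m/2)} else ∅ := by
    split_ifs with h <;> ext ⟨a, b⟩ <;>
      simp only [Finset.mem_filter, Finset.HasAntidiagonal.mem_antidiagonal, Finset.mem_singleton,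
        Finset.notMem_empty, Prod.mk.injEq, iff_false] <;> omega
  rw [hfil]
  split_ifs with hm hex hex
  · rw [Finset.sum_singleton, if_pos]
    obtain ⟨j, hj2, hj3, hj⟩ := hex
    have : m / 2 = j ^ 2 := by omega
    exact ⟨⟨j, hj2, hj3, this⟩, ⟨j, hj2, hj3, this⟩⟩
  · rw [Finset.sum_singleton, if_neg]
    rintro ⟨⟨j, hj2, hj3, hj⟩, -⟩
    exact hex ⟨j, hj2, hj3, by omega⟩
  · exfalso
    obtain ⟨j, hj2, hj3, hj⟩ := hex
    omega
  · exact Finset.sum_empty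

lemma card_bij_pairs (n : ℕ) :
    ((Ypairs n).filter (fun p => p.1 % 3 ≠ 0 ∧ p.2 % 3 ≠ 0)).card
      = ((Finset.HasAntidiagonal.antidiagonal n).filter
          (fun p => (∃ j, j % 2 = 1 ∧ ¬ 3 ∣ j ∧ p.1 = j^2 + j^2) ∧
            (∃ j, j % 2 = 1 ∧ ¬ 3 ∣ j ∧ p.2 = j^2))).card := by
  refine Finset.card_bij (fun p _ => (p.1^2 + p.1^2, p.2^2)) ?_ ?_ ?_
  · rintro ⟨u, v⟩ hp
    simp only [Finset.mem_filter, mem_Ypairs] at hp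
    obtain ⟨⟨hu2, hv2, hn⟩, h3u, h3v⟩ := hp
    simp only [Finset.mem_filter, Finset.HasAntidiagonal.mem_antidiagonal]
    refine ⟨by omega, ⟨u, hu2, by omega, rfl⟩, ⟨v, hv2, by omega, rfl⟩⟩
  · rintro ⟨u, v⟩ h1 ⟨u', v'⟩ h2 heq
    simp only [Prod.mk.injEq] at heq ⊢
    have hu : u^2 = u'^2 := by omega
    have hv : v^2 = v'^2 := by omega
    exact ⟨Nat.pow_left_injective (by norm_num) hu,
      Nat.pow_left_injective (by norm_num) hv⟩
  · rintro ⟨a, b⟩ hb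
    simp only [Finset.mem_filter, Finset.HasAntidiagonal.mem_antidiagonal] at hb
    obtain ⟨hab, ⟨j, hj2, hj3, hj⟩, ⟨j', hj2', hj3', hj'⟩⟩ := hb
    refine ⟨(j, j'), ?_, ?_⟩
    · simp only [Finset.mem_filter, mem_Ypairs]
      exact ⟨⟨hj2, hj2', by omega⟩, by omega, by omega⟩
    · simp only [Prod.mk.injEq]
      omega

theorem stmt_14 : G = D ^ 3 := by
  refine PowerSeries.ext fun n => ?_
  have hD3 : D ^ 3 = D * D * D := by ring
  rw [hD3, PowerSeries.coeff_mul, G, PowerSeries.coeff_mk]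
  have hsummand : ∀ p ∈ Finset.HasAntidiagonal.antidiagonal n,
      PowerSeries.coeff p.1 (D * D) * PowerSeries.coeff p.2 D
        = if (∃ j, j % 2 = 1 ∧ ¬ 3 ∣ j ∧ p.1 = j^2 + j^2) ∧
            (∃ j, j % 2 = 1 ∧ ¬ 3 ∣ j ∧ p.2 = j^2) then 1 else 0 := by
    intro p _
    rw [coeff_DD, coeff_D]
    by_cases hA : (∃ j, j % 2 = 1 ∧ ¬ 3 ∣ j ∧ p.1 = j^2 + j^2) <;>
      by_cases hB : (∃ j, j % 2 = 1 ∧ ¬ 3 ∣ j ∧ p.2 = j^2) <;>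
      simp [hA, hB]
  rw [Finset.sum_congr rfl hsummand, Finset.sum_boole, ← card_bij_pairs n, parity n,
    diag_card n]
  split_ifs <;> simp
end

section
/- Let O = (Z/2)[[t1,t2,t3,t4]] be a 4-variable power series ring with maximal ideal m, and let A, B, C ∈ m have leading forms (lowest-degree homogeneous parts) that are linearly independent linear forms. Suppose I(V) = (A,B) and I(W) = (A^2,C) as ideals of O. Then I(V) ∩ I(W) = (A^2, AC, BC). -/
abbrev O : Type := MvPowerSeries (Fin 4) (ZMod 2)

noncomputable def linPart (A : O) : Fin 4 → ZMod 2 :=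
  fun i => MvPowerSeries.coeff (R := ZMod 2) (Finsupp.single i 1) A

namespace Stmt15Aux

open Finsupp

noncomputable section

abbrev K : Type := ZMod 2
abbrev Poly : Type := MvPolynomial (Fin 4) K

lemma K_add_self : ∀ x : K, x + x = 0 := by decide

lemma O_add_self (x : O) : x + x = 0 := by
  apply MvPowerSeries.ext; intro d
  rw [map_add, K_add_self, map_zero]

lemma P_add_self (p : Poly) : p + p = 0 := by
  apply MvPolynomial.ext; intro d
  rw [MvPolynomial.coeff_add, K_add_self, MvPolynomial.coeff_zero]

lemma dg_add (a b : Fin 4 →₀ ℕ) : (a + b).degree = a.degree + b.degree := by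
  simp [Finsupp.degree_eq_weight_one, map_add]

lemma degree_single_one (i : Fin 4) : (Finsupp.single i 1).degree = 1 := by
  rw [Finsupp.degree_single]

lemma degree_eq_one {d : Fin 4 →₀ ℕ} (hd : d.degree = 1) :
    ∃ i, d = Finsupp.single i 1 := by
  have hd0 : d ≠ 0 := by
    intro h; rw [h, map_zero] at hd; exact one_ne_zero hd.symm
  obtain ⟨i, hi⟩ := Finsupp.support_nonempty_iff.2 hd0
  refine ⟨i, ?_⟩
  have hile : d i ≤ 1 := hd ▸ Finsupp.le_degree i d
  have hige : 1 ≤ d i := Nat.one_le_iff_ne_zero.2 (Finsupp.mem_support_iff.1 hi)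
  ext j
  rcases eq_or_ne j i with rfl | hj
  · simp; omega
  · rw [Finsupp.single_apply, if_neg (by exact fun h => hj h.symm)]
    by_contra hdj
    have hjs : j ∈ d.support := Finsupp.mem_support_iff.2 hdj
    have hsub : ({i, j} : Finset (Fin 4)) ⊆ d.support := by
      intro x hx; simp at hx; rcases hx with rfl | rfl <;> assumption
    have := Finset.sum_le_sum_of_subset (f := fun x => d x) hsub
    rw [Finset.sum_pair (fun h => hj h.symm)] at this
    have : d i + d j ≤ 1 := le_trans this (le_of_eq hd)
    omega

/-- order at least `n` -/
def olow (n : ℕ) (f : O) : Prop :=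
  ∀ d : Fin 4 →₀ ℕ, d.degree < n → MvPowerSeries.coeff (R := K) d f = 0

lemma olow_zero (n : ℕ) : olow n 0 := fun d _ => map_zero _

lemma olow_mono {m n : ℕ} (h : m ≤ n) {f : O} (hf : olow n f) : olow m f :=
  fun d hd => hf d (lt_of_lt_of_le hd h)

lemma olow_add {n : ℕ} {f g : O} (hf : olow n f) (hg : olow n g) : olow n (f + g) := by
  intro d hd; rw [map_add, hf d hd, hg d hd, add_zero]

lemma olow_sub {n : ℕ} {f g : O} (hf : olow n f) (hg : olow n g) : olow n (f - g) := by
  intro d hd; rw [map_sub, hf d hd, hg d hd, sub_zero]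

lemma olow_mul {n m : ℕ} {f g : O} (hf : olow n f) (hg : olow m g) : olow (n + m) (f * g) := by
  intro d hd
  rw [MvPowerSeries.coeff_mul]
  apply Finset.sum_eq_zero
  rintro ⟨u, v⟩ huv
  rw [Finset.HasAntidiagonal.mem_antidiagonal] at huv
  have hdeg : u.degree + v.degree = d.degree := by rw [← dg_add, huv]
  by_cases hu : u.degree < n
  · rw [hf u hu, zero_mul]
  · have : v.degree < m := by omega
    rw [hg v this, mul_zero]

lemma olow_one {f : O} (hf : MvPowerSeries.constantCoeff (σ := Fin 4) (R := K) f = 0) : olow 1 f := by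
  intro d hd
  have : d = 0 := by
    rw [← Finsupp.degree_eq_zero_iff]; omega
  rw [this]
  exact hf

/-- bound for truncation -/
def bnd (n : ℕ) : Fin 4 →₀ ℕ := Finsupp.equivFunOnFinite.symm (fun _ => n + 1)

lemma lt_bnd {n : ℕ} {d : Fin 4 →₀ ℕ} (h : d.degree = n) : d < bnd n := by
  have happ : ∀ i, bnd n i = n + 1 := fun i => rfl
  constructor
  · rw [Finsupp.le_def]
    intro i
    have := h ▸ Finsupp.le_degree i d
    rw [happ i]; omega
  · rw [Finsupp.le_def]
    intro hle
    have := hle 0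
    rw [happ 0] at this
    have := h ▸ Finsupp.le_degree (0 : Fin 4) d
    omega

/-- the degree-`n` homogeneous component of a power series, as a polynomial -/
def comp (n : ℕ) (f : O) : Poly :=
  MvPolynomial.homogeneousComponent n (MvPowerSeries.trunc K (bnd n) f)

lemma coeff_comp (n : ℕ) (f : O) (d : Fin 4 →₀ ℕ) :
    MvPolynomial.coeff d (comp n f) = if d.degree = n then MvPowerSeries.coeff (R := K) d f else 0 := by
  rw [comp, MvPolynomial.coeff_homogeneousComponent, MvPowerSeries.coeff_trunc]
  by_cases hd : d.degree = n
  · simp [hd, lt_bnd hd]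
  · simp [hd]

lemma coeff_comp_coe (n : ℕ) (f : O) (d : Fin 4 →₀ ℕ) :
    MvPowerSeries.coeff (R := K) d (comp n f : O) =
      if d.degree = n then MvPowerSeries.coeff (R := K) d f else 0 := by
  rw [MvPolynomial.coeff_coe, coeff_comp]

lemma comp_isHomogeneous (n : ℕ) (f : O) : (comp n f).IsHomogeneous n :=
  MvPolynomial.homogeneousComponent_isHomogeneous n _

lemma olow_coe {p : Poly} {n : ℕ} (hp : p.IsHomogeneous n) : olow n (p : O) := by
  intro d hd
  rw [MvPolynomial.coeff_coe]
  exact hp.coeff_eq_zero (by omega)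

lemma comp_coe {p : Poly} {n : ℕ} (hp : p.IsHomogeneous n) : comp n (p : O) = p := by
  apply MvPolynomial.ext; intro d
  rw [coeff_comp, MvPolynomial.coeff_coe]
  by_cases hd : d.degree = n
  · rw [if_pos hd]
  · rw [if_neg hd, hp.coeff_eq_zero hd]

lemma Ckey {n m : ℕ} {f g : O} (hf : olow n f) (hg : olow m g) {d : Fin 4 →₀ ℕ}
    (hd : d.degree = n + m) :
    MvPowerSeries.coeff (R := K) d (f * g) =
      MvPowerSeries.coeff (R := K) d ((comp n f : O) * (comp m g : O)) := by
  rw [MvPowerSeries.coeff_mul, MvPowerSeries.coeff_mul]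
  apply Finset.sum_congr rfl
  rintro ⟨u, v⟩ huv
  rw [Finset.HasAntidiagonal.mem_antidiagonal] at huv
  dsimp only
  have hdeg : u.degree + v.degree = n + m := by rw [← dg_add, huv, hd]
  rw [coeff_comp_coe, coeff_comp_coe]
  rcases lt_trichotomy u.degree n with h | h | h
  · rw [hf u h, if_neg (by omega), zero_mul, zero_mul]
  · rw [if_pos h, if_pos (by omega)]
  · rw [hg v (by omega), if_neg (by omega), mul_zero, zero_mul]

lemma Ckey' {n m : ℕ} {f g : O} (hf : olow n f) (hg : olow m g) {d : Fin 4 →₀ ℕ}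
    (hd : d.degree = n + m) :
    MvPowerSeries.coeff (R := K) d (f * g) = MvPolynomial.coeff d (comp n f * comp m g) := by
  rw [Ckey hf hg hd, ← MvPolynomial.coe_mul, MvPolynomial.coeff_coe]

/-- coefficient of a product of homogeneous polynomials off its degree is 0 -/
lemma coeff_homog_mul {p q : Poly} {n m : ℕ} (hp : p.IsHomogeneous n) (hq : q.IsHomogeneous m)
    {d : Fin 4 →₀ ℕ} (hd : d.degree ≠ n + m) : MvPolynomial.coeff d (p * q) = 0 :=
  (hp.mul hq).coeff_eq_zero hd

lemma hcomp_mul_right (U L : Poly) (hL : L.IsHomogeneous 1) (n : ℕ) :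
    MvPolynomial.homogeneousComponent (n + 1) (U * L) =
      MvPolynomial.homogeneousComponent n U * L := by
  apply MvPolynomial.ext; intro d
  rw [MvPolynomial.coeff_homogeneousComponent, MvPolynomial.coeff_mul, MvPolynomial.coeff_mul]
  by_cases hd : d.degree = n + 1
  · rw [if_pos hd]
    apply Finset.sum_congr rfl
    rintro ⟨u, v⟩ huv
    rw [Finset.HasAntidiagonal.mem_antidiagonal] at huv
    dsimp only
    have hdeg : u.degree + v.degree = n + 1 := by rw [← dg_add, huv, hd]
    rw [MvPolynomial.coeff_homogeneousComponent]
    by_cases hv : v.degree = 1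
    · rw [if_pos (by omega)]
    · rw [hL.coeff_eq_zero hv, mul_zero, mul_zero]
  · rw [if_neg hd]
    symm
    apply Finset.sum_eq_zero
    rintro ⟨u, v⟩ huv
    rw [Finset.HasAntidiagonal.mem_antidiagonal] at huv
    dsimp only
    have hdeg : u.degree + v.degree = d.degree := by rw [← dg_add, huv]
    rw [MvPolynomial.coeff_homogeneousComponent]
    by_cases hu : u.degree = n
    · have : v.degree ≠ 1 := by omega
      rw [hL.coeff_eq_zero this, mul_zero]
    · rw [if_neg hu, zero_mul]

end
end Stmt15Aux
namespace Stmt15Aux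
open Finsupp
noncomputable section

def lin (v : Fin 4 → K) : Poly := ∑ j, MvPolynomial.C (v j) * MvPolynomial.X j

lemma comp_one_eq (f : O) :
    comp 1 f = lin (fun i => MvPowerSeries.coeff (R := K) (Finsupp.single i 1) f) := by
  apply MvPolynomial.ext; intro d
  rw [coeff_comp, lin, MvPolynomial.coeff_sum]
  simp only [MvPolynomial.coeff_C_mul, MvPolynomial.coeff_X']
  by_cases hd : d.degree = 1
  · obtain ⟨i, rfl⟩ := degree_eq_one hd
    rw [if_pos hd, Finset.sum_eq_single i]
    · rw [if_pos rfl, mul_one]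
    · intro j _ hj
      rw [if_neg (fun h => hj (by
        have := (Finsupp.single_left_inj (one_ne_zero (α := ℕ))).1 h; exact this)), mul_zero]
    · intro h; exact absurd (Finset.mem_univ i) h
  · rw [if_neg hd]
    symm
    apply Finset.sum_eq_zero
    intro j _
    rw [if_neg (fun h => hd (by rw [← h, degree_single_one])), mul_zero]

lemma P_eq_of_add_eq_zero {x y : Poly} (h : x + y = 0) : x = y := by
  have h2 := P_add_self y
  linear_combination h - h2

lemma O_eq_of_add_eq_zero {x y : O} (h : x + y = 0) : x = y := by
  have h2 := O_add_self y
  linear_combination h - h2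

lemma Pvar1 (p q : Poly) (h : p * MvPolynomial.X 0 = q * MvPolynomial.X 1) :
    ∃ w, p = w * MvPolynomial.X 1 ∧ q = w * MvPolynomial.X 0 := by
  classical
  have hmod : p.modMonomial (Finsupp.single 1 1) = 0 := by
    apply MvPolynomial.ext; intro d
    rw [MvPolynomial.coeff_zero]
    by_cases hle : (Finsupp.single (1 : Fin 4) 1) ≤ d
    · exact MvPolynomial.coeff_modMonomial_of_le p hle
    · rw [MvPolynomial.coeff_modMonomial_of_not_le p hle]
      have hd1 : d 1 = 0 := by
        by_contra h1
        exact hle (Finsupp.single_le_iff.2 (by omega))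
      have hkey := MvPolynomial.coeff_mul_X d 0 p
      rw [h, MvPolynomial.coeff_mul_X'] at hkey
      rw [if_neg (by
        simp only [Finsupp.mem_support_iff, Finsupp.add_apply, Finsupp.single_apply]
        simp [hd1])] at hkey
      exact hkey.symm
  set w := p.divMonomial (Finsupp.single 1 1) with hw
  have hp : p = w * MvPolynomial.X 1 := by
    have := MvPolynomial.modMonomial_add_divMonomial_single p 1
    rw [hmod, zero_add] at this
    rw [← this, mul_comm]
  refine ⟨w, hp, ?_⟩
  apply mul_right_cancel₀ (MvPolynomial.X_ne_zero (1 : Fin 4))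
  rw [← h, hp]; ring

lemma Pvar2 (p a b : Poly)
    (h : p * MvPolynomial.X 2 = a * MvPolynomial.X 0 + b * MvPolynomial.X 1) :
    ∃ u v, p = u * MvPolynomial.X 0 + v * MvPolynomial.X 1 := by
  classical
  have hmem : p ∈ Ideal.span ({MvPolynomial.X 0, MvPolynomial.X 1} : Set Poly) := by
    rw [← Set.image_pair (MvPolynomial.X) (0 : Fin 4) 1,
      MvPolynomial.mem_ideal_span_X_image]
    intro m hm
    by_contra hcon; push_neg at hcon
    have h0 : m 0 = 0 := hcon 0 (by simp)
    have h1 : m 1 = 0 := hcon 1 (by simp)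
    have hkey := MvPolynomial.coeff_mul_X m 2 p
    rw [h, MvPolynomial.coeff_add, MvPolynomial.coeff_mul_X', MvPolynomial.coeff_mul_X'] at hkey
    rw [if_neg (by
      simp only [Finsupp.mem_support_iff, Finsupp.add_apply, Finsupp.single_apply]
      simp [h0]), if_neg (by
      simp only [Finsupp.mem_support_iff, Finsupp.add_apply, Finsupp.single_apply]
      simp [h1]), add_zero] at hkey
    exact (MvPolynomial.mem_support_iff.1 hm) hkey.symm
  obtain ⟨u, v, huv⟩ := Submodule.mem_span_pair.1 hmem
  exact ⟨u, v, by rw [← huv]; simp [smul_eq_mul]⟩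

lemma exists_equiv (v : Fin 3 → Fin 4 → K) (h : LinearIndependent K v) :
    ∃ Φ Ψ : Poly →ₐ[K] Poly,
      (∀ p, Φ (Ψ p) = p) ∧ (∀ p, Ψ (Φ p) = p) ∧
      (∀ j : Fin 3, Φ (MvPolynomial.X (Fin.castSucc j)) = lin (v j)) := by
  classical
  have hsp : Submodule.span K (Set.range v) ≠ ⊤ := by
    intro htop
    have h3 : Module.finrank K (Submodule.span K (Set.range v)) = 3 := by
      rw [finrank_span_eq_card h]; simp
    rw [htop, finrank_top, Module.finrank_pi] at h3
    simp at h3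
  obtain ⟨x, hx⟩ : ∃ x, x ∉ Submodule.span K (Set.range v) := by
    by_contra hall; push_neg at hall
    exact hsp (Submodule.eq_top_iff'.2 hall)
  have hwli : LinearIndependent K (Fin.snoc v x : Fin 4 → Fin 4 → K) :=
    linearIndependent_fin_snoc.2 ⟨h, hx⟩
  have hcard : Fintype.card (Fin 4) = Module.finrank K (Fin 4 → K) := by
    rw [Module.finrank_pi]
  let b : Module.Basis (Fin 4) K (Fin 4 → K) := basisOfLinearIndependentOfCardEqFinrank hwli hcard
  have hb : ⇑b = Fin.snoc v x := coe_basisOfLinearIndependentOfCardEqFinrank _ _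
  let e : Module.Basis (Fin 4) K (Fin 4 → K) := Pi.basisFun K (Fin 4)
  set M : Matrix (Fin 4) (Fin 4) K := e.toMatrix b with hM
  set N : Matrix (Fin 4) (Fin 4) K := b.toMatrix e with hN
  have hMN : M * N = 1 := Module.Basis.toMatrix_mul_toMatrix_flip e b
  have hNM : N * M = 1 := Module.Basis.toMatrix_mul_toMatrix_flip b e
  have hMentry : ∀ i j, M i j = (Fin.snoc v x : Fin 4 → Fin 4 → K) j i := by
    intro i j
    rw [hM, Module.Basis.toMatrix_apply, ← hb]
    exact Pi.basisFun_repr K (Fin 4) (b j) i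
  have key : ∀ (P Q : Matrix (Fin 4) (Fin 4) K), P * Q = 1 → ∀ i,
      (MvPolynomial.aeval (fun i' => ∑ j, MvPolynomial.C (P j i') * MvPolynomial.X j) : Poly →ₐ[K] Poly)
        (∑ j, MvPolynomial.C (Q j i) * MvPolynomial.X j) = MvPolynomial.X i := by
    intro P Q hPQ i
    rw [map_sum]
    simp only [map_mul, MvPolynomial.aeval_C, MvPolynomial.aeval_X, MvPolynomial.algebraMap_eq]
    simp_rw [Finset.mul_sum, ← mul_assoc, ← MvPolynomial.C_mul]
    rw [Finset.sum_comm]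
    simp_rw [← Finset.sum_mul, ← map_sum]
    have hentry : ∀ k, (∑ j, Q j i * P k j) = (P * Q) k i := by
      intro k; rw [Matrix.mul_apply]
      apply Finset.sum_congr rfl; intros; ring
    simp_rw [hentry, hPQ]
    rw [Finset.sum_eq_single i]
    · rw [Matrix.one_apply_eq, map_one, one_mul]
    · intro j _ hj
      rw [Matrix.one_apply_ne (fun hh => hj hh), map_zero, zero_mul]
    · intro hi; exact absurd (Finset.mem_univ i) hi
  refine ⟨MvPolynomial.aeval (fun i' => ∑ j, MvPolynomial.C (M j i') * MvPolynomial.X j),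
    MvPolynomial.aeval (fun i' => ∑ j, MvPolynomial.C (N j i') * MvPolynomial.X j), ?_, ?_, ?_⟩
  · intro p
    have hcomp : (MvPolynomial.aeval (fun i' => ∑ j, MvPolynomial.C (M j i') * MvPolynomial.X j) :
        Poly →ₐ[K] Poly).comp
        (MvPolynomial.aeval (fun i' => ∑ j, MvPolynomial.C (N j i') * MvPolynomial.X j)) =
        AlgHom.id K Poly := by
      apply MvPolynomial.algHom_ext; intro i
      simp only [AlgHom.comp_apply, AlgHom.id_apply, MvPolynomial.aeval_X]
      exact key M N hMN i
    exact DFunLike.congr_fun hcomp p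
  · intro p
    have hcomp : (MvPolynomial.aeval (fun i' => ∑ j, MvPolynomial.C (N j i') * MvPolynomial.X j) :
        Poly →ₐ[K] Poly).comp
        (MvPolynomial.aeval (fun i' => ∑ j, MvPolynomial.C (M j i') * MvPolynomial.X j)) =
        AlgHom.id K Poly := by
      apply MvPolynomial.algHom_ext; intro i
      simp only [AlgHom.comp_apply, AlgHom.id_apply, MvPolynomial.aeval_X]
      exact key N M hNM i
    exact DFunLike.congr_fun hcomp p
  · intro j
    rw [MvPolynomial.aeval_X]
    rw [lin]
    apply Finset.sum_congr rfl
    intro k _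
    rw [hMentry k (Fin.castSucc j), Fin.snoc_castSucc]

end
end Stmt15Aux
namespace Stmt15Aux
open Finsupp
noncomputable section

lemma olow_zero' (f : O) : olow 0 f := fun _ hd => absurd hd (Nat.not_lt_zero _)

lemma olow_neg {n : ℕ} {f : O} (hf : olow n f) : olow n (-f) := by
  intro d hd; rw [map_neg, hf d hd, neg_zero]

structure Ctx where
  A : O
  B : O
  C : O
  hA1 : olow 1 A
  hB1 : olow 1 B
  hC1 : olow 1 C
  P1raw : ∀ F G : Poly, F * comp 1 A + G * comp 1 B = 0 →
    ∃ H, F = H * comp 1 B ∧ G = H * comp 1 A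
  P2raw : ∀ R F G : Poly, R * comp 1 C = F * comp 1 A + G * comp 1 B →
    ∃ U V, R = U * comp 1 A + V * comp 1 B

namespace Ctx

lemma P1h (c : Ctx) (m : ℕ) (F G : Poly) (hF : F.IsHomogeneous (m + 1))
    (hG : G.IsHomogeneous (m + 1)) (hFG : F * comp 1 c.A + G * comp 1 c.B = 0) :
    ∃ H : Poly, H.IsHomogeneous m ∧ F = H * comp 1 c.B ∧ G = H * comp 1 c.A := by
  obtain ⟨H0, hF0, hG0⟩ := c.P1raw F G hFG
  have hFc : MvPolynomial.homogeneousComponent (m + 1) F = F := by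
    rw [MvPolynomial.homogeneousComponent_of_mem
      ((MvPolynomial.mem_homogeneousSubmodule _ _).2 hF), if_pos rfl]
  have hGc : MvPolynomial.homogeneousComponent (m + 1) G = G := by
    rw [MvPolynomial.homogeneousComponent_of_mem
      ((MvPolynomial.mem_homogeneousSubmodule _ _).2 hG), if_pos rfl]
  refine ⟨MvPolynomial.homogeneousComponent m H0,
    MvPolynomial.homogeneousComponent_isHomogeneous m _, ?_, ?_⟩
  · conv_lhs => rw [← hFc, hF0]
    rw [hcomp_mul_right _ _ (comp_isHomogeneous 1 c.B)]
  · conv_lhs => rw [← hGc, hG0]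
    rw [hcomp_mul_right _ _ (comp_isHomogeneous 1 c.A)]

lemma const_comp_one (f : O) : MvPolynomial.constantCoeff (comp 1 f) = 0 := by
  rw [MvPolynomial.constantCoeff_eq]
  exact (comp_isHomogeneous 1 f).coeff_eq_zero (by rw [map_zero]; omega)

lemma eq_C_of_homog_zero {F : Poly} (hF : F.IsHomogeneous 0) :
    F = MvPolynomial.C (MvPolynomial.constantCoeff F) := by
  have h1 : MvPolynomial.homogeneousComponent 0 F = F := by
    rw [MvPolynomial.homogeneousComponent_of_mem
      ((MvPolynomial.mem_homogeneousSubmodule _ _).2 hF), if_pos rfl]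
  rw [MvPolynomial.constantCoeff_eq]
  conv_lhs => rw [← h1, MvPolynomial.homogeneousComponent_zero]

lemma P1z (c : Ctx) (F G : Poly) (hF : F.IsHomogeneous 0) (hG : G.IsHomogeneous 0)
    (hFG : F * comp 1 c.A + G * comp 1 c.B = 0) : F = 0 ∧ G = 0 := by
  obtain ⟨H0, hF0, hG0⟩ := c.P1raw F G hFG
  constructor
  · rw [eq_C_of_homog_zero hF, hF0, map_mul, const_comp_one, mul_zero, map_zero]
  · rw [eq_C_of_homog_zero hG, hG0, map_mul, const_comp_one, mul_zero, map_zero]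

lemma P2h (c : Ctx) (n : ℕ) (Rp F G : Poly)
    (h : Rp * comp 1 c.C = F * comp 1 c.A + G * comp 1 c.B)
    (hR : Rp.IsHomogeneous (n + 1)) :
    ∃ U V : Poly, U.IsHomogeneous n ∧ V.IsHomogeneous n ∧
      Rp = U * comp 1 c.A + V * comp 1 c.B := by
  obtain ⟨U0, V0, h0⟩ := c.P2raw Rp F G h
  have hRc : MvPolynomial.homogeneousComponent (n + 1) Rp = Rp := by
    rw [MvPolynomial.homogeneousComponent_of_mem
      ((MvPolynomial.mem_homogeneousSubmodule _ _).2 hR), if_pos rfl]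
  refine ⟨MvPolynomial.homogeneousComponent n U0, MvPolynomial.homogeneousComponent n V0,
    MvPolynomial.homogeneousComponent_isHomogeneous n _,
    MvPolynomial.homogeneousComponent_isHomogeneous n _, ?_⟩
  conv_lhs => rw [← hRc, h0]
  rw [map_add, hcomp_mul_right _ _ (comp_isHomogeneous 1 c.A),
    hcomp_mul_right _ _ (comp_isHomogeneous 1 c.B)]

lemma P2z (c : Ctx) (Rp F G : Poly)
    (h : Rp * comp 1 c.C = F * comp 1 c.A + G * comp 1 c.B)
    (hR : Rp.IsHomogeneous 0) : Rp = 0 := by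
  obtain ⟨U0, V0, h0⟩ := c.P2raw Rp F G h
  rw [eq_C_of_homog_zero hR, h0, map_add, map_mul, map_mul, const_comp_one, const_comp_one,
    mul_zero, mul_zero, add_zero, map_zero]

lemma raise (c : Ctx) {n : ℕ} {r : O} (hr : olow n r) :
    ∀ (j m : ℕ) (f g : O), n ≤ m + j → f * c.A + g * c.B = r * c.C → olow m f → olow m g →
      ∃ f' g', f' * c.A + g' * c.B = r * c.C ∧ olow n f' ∧ olow n g' := by
  intro j
  induction j with
  | zero =>
    intro m f g hle hfg hf hg
    exact ⟨f, g, hfg, olow_mono (by omega) hf, olow_mono (by omega) hg⟩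
  | succ j ih =>
    intro m f g hle hfg hf hg
    by_cases hnm : n ≤ m
    · exact ⟨f, g, hfg, olow_mono hnm hf, olow_mono hnm hg⟩
    push_neg at hnm
    have hrc : olow (n + 1) (r * c.C) := olow_mul hr c.hC1
    have hpoly : comp m f * comp 1 c.A + comp m g * comp 1 c.B = 0 := by
      apply MvPolynomial.ext; intro d
      rw [MvPolynomial.coeff_add, MvPolynomial.coeff_zero]
      by_cases hd : d.degree = m + 1
      · rw [← Ckey' hf c.hA1 hd, ← Ckey' hg c.hB1 hd, ← map_add, hfg]
        exact hrc d (by omega)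
      · rw [coeff_homog_mul (comp_isHomogeneous m f) (comp_isHomogeneous 1 c.A) hd,
          coeff_homog_mul (comp_isHomogeneous m g) (comp_isHomogeneous 1 c.B) hd, add_zero]
    rcases m with _ | m'
    · obtain ⟨hF0, hG0⟩ := c.P1z _ _ (comp_isHomogeneous 0 f) (comp_isHomogeneous 0 g) hpoly
      have hf1 : olow 1 f := by
        intro d hd
        have h0 : d.degree = 0 := by omega
        have hcf := coeff_comp 0 f d
        rw [hF0, MvPolynomial.coeff_zero, if_pos h0] at hcf
        exact hcf.symm
      have hg1 : olow 1 g := by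
        intro d hd
        have h0 : d.degree = 0 := by omega
        have hcf := coeff_comp 0 g d
        rw [hG0, MvPolynomial.coeff_zero, if_pos h0] at hcf
        exact hcf.symm
      exact ih 1 f g (by omega) hfg hf1 hg1
    · obtain ⟨H, hH, hFe, hGe⟩ := c.P1h m' _ _ (comp_isHomogeneous _ f)
        (comp_isHomogeneous _ g) hpoly
      have hOH : olow m' ((H : O)) := olow_coe hH
      have heq : (f - (H : O) * c.B) * c.A + (g - (H : O) * c.A) * c.B = r * c.C := by
        have hz := O_add_self ((H : O) * (c.A * c.B))
        linear_combination hfg - hz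
      have hf₂low : olow (m' + 2) (f - (H : O) * c.B) := by
        intro d hd
        rw [map_sub]
        by_cases hdm : d.degree = m' + 1
        · have h1 : MvPowerSeries.coeff (R := K) d f = MvPolynomial.coeff d (comp (m' + 1) f) := by
            rw [coeff_comp, if_pos hdm]
          have h2 : MvPowerSeries.coeff (R := K) d ((H : O) * c.B) =
              MvPolynomial.coeff d (comp m' (H : O) * comp 1 c.B) :=
            Ckey' hOH c.hB1 (by omega)
          rw [h1, h2, comp_coe hH, hFe, sub_self]
        · rw [hf d (by omega), (olow_mul hOH c.hB1) d (by omega), sub_zero]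
      have hg₂low : olow (m' + 2) (g - (H : O) * c.A) := by
        intro d hd
        rw [map_sub]
        by_cases hdm : d.degree = m' + 1
        · have h1 : MvPowerSeries.coeff (R := K) d g = MvPolynomial.coeff d (comp (m' + 1) g) := by
            rw [coeff_comp, if_pos hdm]
          have h2 : MvPowerSeries.coeff (R := K) d ((H : O) * c.A) =
              MvPolynomial.coeff d (comp m' (H : O) * comp 1 c.A) :=
            Ckey' hOH c.hA1 (by omega)
          rw [h1, h2, comp_coe hH, hGe, sub_self]
        · rw [hg d (by omega), (olow_mul hOH c.hA1) d (by omega), sub_zero]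
      exact ih (m' + 2) _ _ (by omega) heq hf₂low hg₂low

def Inv (c : Ctx) (q : O) (n : ℕ) (x : O × O × O × O × O) : Prop :=
  q = x.1 * c.A + x.2.1 * c.B + x.2.2.1 ∧
  x.2.2.1 * c.C = x.2.2.2.1 * c.A + x.2.2.2.2 * c.B ∧
  olow n x.2.2.1

lemma step (c : Ctx) (q : O) (n : ℕ) (x : O × O × O × O × O) (hx : Inv c q n x) :
    ∃ y : O × O × O × O × O, Inv c q (n + 1) y ∧
      olow (n - 1) (y.1 - x.1) ∧ olow (n - 1) (y.2.1 - x.2.1) := by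
  obtain ⟨a, b, r, f, g⟩ := x
  obtain ⟨ha, hrc, hr⟩ := hx
  simp only [Inv] at *
  obtain ⟨f', g', hfg', hf', hg'⟩ :=
    c.raise hr n 0 f g (by omega) hrc.symm (olow_zero' f) (olow_zero' g)
  have hpoly : comp n r * comp 1 c.C = comp n f' * comp 1 c.A + comp n g' * comp 1 c.B := by
    apply MvPolynomial.ext; intro d
    rw [MvPolynomial.coeff_add]
    by_cases hd : d.degree = n + 1
    · rw [← Ckey' hr c.hC1 hd, ← Ckey' hf' c.hA1 hd, ← Ckey' hg' c.hB1 hd, ← map_add, hfg']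
    · rw [coeff_homog_mul (comp_isHomogeneous n r) (comp_isHomogeneous 1 c.C) hd,
        coeff_homog_mul (comp_isHomogeneous n f') (comp_isHomogeneous 1 c.A) hd,
        coeff_homog_mul (comp_isHomogeneous n g') (comp_isHomogeneous 1 c.B) hd, add_zero]
  rcases n with _ | n'
  · have hz : comp 0 r = 0 := c.P2z _ _ _ hpoly (comp_isHomogeneous 0 r)
    have hr1 : olow 1 r := by
      intro d hd
      have h0 : d.degree = 0 := by omega
      have hcf := coeff_comp 0 r d
      rw [hz, MvPolynomial.coeff_zero, if_pos h0] at hcf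
      exact hcf.symm
    exact ⟨(a, b, r, f', g'), ⟨ha, hfg'.symm, hr1⟩,
      by rw [show a - a = 0 by ring]; exact olow_zero _,
      by rw [show b - b = 0 by ring]; exact olow_zero _⟩
  · obtain ⟨U, V, hU, hV, hre⟩ := c.P2h n' _ _ _ hpoly (comp_isHomogeneous (n' + 1) r)
    refine ⟨(a + (U : O), b + (V : O), r - (U : O) * c.A - (V : O) * c.B,
      f' - (U : O) * c.C, g' - (V : O) * c.C), ⟨?_, ?_, ?_⟩, ?_, ?_⟩
    · linear_combination ha
    · linear_combination hfg'.symm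
    · intro d hd
      rw [map_sub, map_sub]
      by_cases hdm : d.degree = n' + 1
      · have h1 : MvPowerSeries.coeff (R := K) d r = MvPolynomial.coeff d (comp (n' + 1) r) := by
          rw [coeff_comp, if_pos hdm]
        have h2 : MvPowerSeries.coeff (R := K) d ((U : O) * c.A) =
            MvPolynomial.coeff d (comp n' (U : O) * comp 1 c.A) :=
          Ckey' (olow_coe hU) c.hA1 (by omega)
        have h3 : MvPowerSeries.coeff (R := K) d ((V : O) * c.B) =
            MvPolynomial.coeff d (comp n' (V : O) * comp 1 c.B) :=
          Ckey' (olow_coe hV) c.hB1 (by omega)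
        rw [h1, h2, h3, comp_coe hU, comp_coe hV, hre, MvPolynomial.coeff_add]
        ring
      · rw [hr d (by omega), (olow_mul (olow_coe hU) c.hA1) d (by omega),
          (olow_mul (olow_coe hV) c.hB1) d (by omega)]
        ring
    · rw [show a + (U : O) - a = (U : O) by ring]
      exact olow_coe hU
    · rw [show b + (V : O) - b = (V : O) by ring]
      exact olow_coe hV

lemma main (c : Ctx) (q f g : O) (h : q * c.C = f * c.A + g * c.B) :
    ∃ a b : O, q = a * c.A + b * c.B := by
  classical
  let T : ∀ n : ℕ, {x : O × O × O × O × O // Inv c q n x} := fun n =>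
    Nat.rec ⟨(0, 0, q, f, g), by
      refine ⟨by ring, h, olow_zero' q⟩⟩
      (fun n p => ⟨(c.step q n p.1 p.2).choose, (c.step q n p.1 p.2).choose_spec.1⟩) n
  let a : ℕ → O := fun n => (T n).1.1
  let b : ℕ → O := fun n => (T n).1.2.1
  let r : ℕ → O := fun n => (T n).1.2.2.1
  have hInv : ∀ n, Inv c q n (T n).1 := fun n => (T n).2
  have hstep : ∀ n, olow (n - 1) (a (n + 1) - a n) ∧ olow (n - 1) (b (n + 1) - b n) :=
    fun n => (c.step q n (T n).1 (T n).2).choose_spec.2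
  have tele : ∀ (u : ℕ → O), (∀ n, olow (n - 1) (u (n + 1) - u n)) →
      ∀ n m, n ≤ m → olow (n - 1) (u m - u n) := by
    intro u hu n m
    induction m with
    | zero =>
      intro hnm
      have : n = 0 := by omega
      subst this
      rw [sub_self]; exact olow_zero _
    | succ m ih =>
      intro hnm
      by_cases hc : n = m + 1
      · subst hc; rw [sub_self]; exact olow_zero _
      · have h1 := ih (by omega)
        have h2 : olow (n - 1) (u (m + 1) - u m) := olow_mono (by omega) (hu m)
        have h3 := olow_add h2 h1
        rw [show u (m + 1) - u m + (u m - u n) = u (m + 1) - u n by ring] at h3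
        exact h3
  let aL : O := fun d => MvPowerSeries.coeff (R := K) d (a (d.degree + 2))
  let bL : O := fun d => MvPowerSeries.coeff (R := K) d (b (d.degree + 2))
  have haL : ∀ n, olow (n - 1) (a n - aL) := by
    intro n d hd
    have h1 : MvPowerSeries.coeff (R := K) d aL = MvPowerSeries.coeff (R := K) d (a (d.degree + 2)) := rfl
    have ht := tele a (fun k => (hstep k).1) (d.degree + 2) (max n (d.degree + 2))
      (le_max_right _ _) d (by omega)
    rw [map_sub] at ht
    have ht2 := tele a (fun k => (hstep k).1) n (max n (d.degree + 2))
      (le_max_left _ _) d (by omega)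
    rw [map_sub] at ht2
    rw [map_sub, h1]
    rw [sub_eq_zero] at ht ht2
    rw [← ht, ht2, sub_self]
  have hbL : ∀ n, olow (n - 1) (b n - bL) := by
    intro n d hd
    have h1 : MvPowerSeries.coeff (R := K) d bL = MvPowerSeries.coeff (R := K) d (b (d.degree + 2)) := rfl
    have ht := tele b (fun k => (hstep k).2) (d.degree + 2) (max n (d.degree + 2))
      (le_max_right _ _) d (by omega)
    rw [map_sub] at ht
    have ht2 := tele b (fun k => (hstep k).2) n (max n (d.degree + 2))
      (le_max_left _ _) d (by omega)
    rw [map_sub] at ht2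
    rw [map_sub, h1]
    rw [sub_eq_zero] at ht ht2
    rw [← ht, ht2, sub_self]
  have hfin : q - aL * c.A - bL * c.B = 0 := by
    apply MvPowerSeries.ext; intro d
    rw [map_zero]
    obtain ⟨hqn, _, hrn⟩ := hInv (d.degree + 2)
    have hid : q - aL * c.A - bL * c.B =
        r (d.degree + 2) + (a (d.degree + 2) - aL) * c.A + (b (d.degree + 2) - bL) * c.B := by
      linear_combination hqn
    rw [hid, map_add, map_add]
    rw [hrn d (by omega),
      (olow_mul (haL (d.degree + 2)) c.hA1) d (by omega),
      (olow_mul (hbL (d.degree + 2)) c.hB1) d (by omega)]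
    ring
  exact ⟨aL, bL, by linear_combination hfin⟩

end Ctx
end
end Stmt15Aux
namespace Stmt15Aux
noncomputable section

lemma mkCtx (A B C : O)
    (hA0 : MvPowerSeries.constantCoeff (σ := Fin 4) (R := ZMod 2) A = 0)
    (hB0 : MvPowerSeries.constantCoeff (σ := Fin 4) (R := ZMod 2) B = 0)
    (hC0 : MvPowerSeries.constantCoeff (σ := Fin 4) (R := ZMod 2) C = 0)
    (hind : LinearIndependent (ZMod 2) ![linPart A, linPart B, linPart C]) :
    ∃ c : Ctx, c.A = A ∧ c.B = B ∧ c.C = C := by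
  obtain ⟨Φ, Ψ, hΦΨ, hΨΦ, hX⟩ := exists_equiv ![linPart A, linPart B, linPart C] hind
  have hLA : comp 1 A = Φ (MvPolynomial.X 0) := by
    have h0 := hX 0
    simp only [Matrix.cons_val_zero] at h0
    rw [comp_one_eq]
    exact h0.symm
  have hLB : comp 1 B = Φ (MvPolynomial.X 1) := by
    have h0 := hX 1
    simp only [Matrix.cons_val_one, Matrix.head_cons] at h0
    rw [comp_one_eq]
    exact h0.symm
  have hLC : comp 1 C = Φ (MvPolynomial.X 2) := by
    have h0 := hX 2
    simp only [Matrix.cons_val_two, Matrix.tail_cons, Matrix.head_cons] at h0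
    rw [comp_one_eq]
    exact h0.symm
  refine ⟨⟨A, B, C, olow_one hA0, olow_one hB0, olow_one hC0, ?_, ?_⟩, rfl, rfl, rfl⟩
  · intro F G hFG
    rw [hLA, hLB] at hFG
    have h2 := congrArg Ψ hFG
    rw [map_add, map_mul, map_mul, map_zero, hΨΦ, hΨΦ] at h2
    have h3 := P_eq_of_add_eq_zero h2
    obtain ⟨w, hw1, hw2⟩ := Pvar1 _ _ h3
    refine ⟨Φ w, ?_, ?_⟩
    · have hF := congrArg Φ hw1
      rw [map_mul, hΦΨ] at hF
      rw [hF, hLB]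
    · have hG := congrArg Φ hw2
      rw [map_mul, hΦΨ] at hG
      rw [hG, hLA]
  · intro Rp F G hR
    rw [hLA, hLB, hLC] at hR
    have h2 := congrArg Ψ hR
    rw [map_add, map_mul, map_mul, map_mul, hΨΦ, hΨΦ, hΨΦ] at h2
    obtain ⟨u, v, huv⟩ := Pvar2 _ _ _ h2
    refine ⟨Φ u, Φ v, ?_⟩
    have hRp := congrArg Φ huv
    rw [map_add, map_mul, map_mul, hΦΨ] at hRp
    rw [hRp, hLA, hLB]

end
end Stmt15Aux

theorem stmt_15 (A B C : O)
    (hA0 : MvPowerSeries.constantCoeff (σ := Fin 4) (R := ZMod 2) A = 0)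
    (hB0 : MvPowerSeries.constantCoeff (σ := Fin 4) (R := ZMod 2) B = 0)
    (hC0 : MvPowerSeries.constantCoeff (σ := Fin 4) (R := ZMod 2) C = 0)
    (hind : LinearIndependent (ZMod 2) ![linPart A, linPart B, linPart C]) :
    Ideal.span {A, B} ⊓ Ideal.span {A ^ 2, C} =
      Ideal.span {A ^ 2, A * C, B * C} := by
  obtain ⟨c, hcA, hcB, hcC⟩ := Stmt15Aux.mkCtx A B C hA0 hB0 hC0 hind
  subst hcA; subst hcB; subst hcC
  apply le_antisymm
  · intro x hx
    obtain ⟨hx1, hx2⟩ := Submodule.mem_inf.1 hx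
    obtain ⟨p, q, hpq⟩ := Submodule.mem_span_pair.1 hx2
    simp only [smul_eq_mul] at hpq
    have hqC : q * c.C ∈ Ideal.span {c.A, c.B} := by
      have hA2 : c.A ^ 2 ∈ Ideal.span {c.A, c.B} :=
        Submodule.mem_span_pair.2 ⟨c.A, 0, by rw [smul_eq_mul, smul_eq_mul]; ring⟩
      have hqq : q * c.C = x - p * c.A ^ 2 := by linear_combination hpq
      rw [hqq]
      exact Submodule.sub_mem _ hx1 (Ideal.mul_mem_left _ p hA2)
    obtain ⟨f, g, hfg⟩ := Submodule.mem_span_pair.1 hqC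
    simp only [smul_eq_mul] at hfg
    obtain ⟨a, b, hab⟩ := Stmt15Aux.Ctx.main c q f g hfg.symm
    rw [← hpq, hab]
    have h1 : c.A ^ 2 ∈ Ideal.span {c.A ^ 2, c.A * c.C, c.B * c.C} :=
      Ideal.subset_span (by simp)
    have h2 : c.A * c.C ∈ Ideal.span {c.A ^ 2, c.A * c.C, c.B * c.C} :=
      Ideal.subset_span (by simp)
    have h3 : c.B * c.C ∈ Ideal.span {c.A ^ 2, c.A * c.C, c.B * c.C} :=
      Ideal.subset_span (by simp)
    have hre : p * c.A ^ 2 + (a * c.A + b * c.B) * c.C =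
        p * c.A ^ 2 + a * (c.A * c.C) + b * (c.B * c.C) := by ring
    rw [hre]
    exact Submodule.add_mem _
      (Submodule.add_mem _ (Ideal.mul_mem_left _ p h1) (Ideal.mul_mem_left _ a h2))
      (Ideal.mul_mem_left _ b h3)
  · rw [Ideal.span_le]
    rintro y hy
    simp only [Set.mem_insert_iff, Set.mem_singleton_iff] at hy
    simp only [SetLike.mem_coe]
    rcases hy with rfl | rfl | rfl
    · exact Submodule.mem_inf.2
        ⟨Submodule.mem_span_pair.2 ⟨c.A, 0, by rw [smul_eq_mul, smul_eq_mul]; ring⟩,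
         Submodule.mem_span_pair.2 ⟨1, 0, by rw [smul_eq_mul, smul_eq_mul]; ring⟩⟩
    · exact Submodule.mem_inf.2
        ⟨Submodule.mem_span_pair.2 ⟨c.C, 0, by rw [smul_eq_mul, smul_eq_mul]; ring⟩,
         Submodule.mem_span_pair.2 ⟨0, c.A, by rw [smul_eq_mul, smul_eq_mul]; ring⟩⟩
    · exact Submodule.mem_inf.2
        ⟨Submodule.mem_span_pair.2 ⟨0, c.C, by rw [smul_eq_mul, smul_eq_mul]; ring⟩,
         Submodule.mem_span_pair.2 ⟨0, c.B, by rw [smul_eq_mul, smul_eq_mul]; ring⟩⟩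
end
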